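/- arXiv:1801.08243 — 3 statements merged into one kernel-verified Lean document; each statement's English description precedes it below -/
import Mathlib

section
/- For any finite simple graph G, χ_v(G) equals the maximum, over symmetric real matrices A indexed by the vertices of G satisfying A_ij = 0 whenever i = j or i and j are distinct non-adjacent vertices, A_ij ≥ 0 for all i,j, and I + A positive semidefinite, of the largest eigenvalue of I + A. -/
open Matrix Kronecker

noncomputable section VectorColoring

variable {V α β : Type*}

/-- A vector `t`-coloring of a graph `G`: vectors `p i` with `p i ⬝ᵥ p i = t - 1`
and `p i ⬝ᵥ p j ≤ -1` on edges. -/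
def IsVecColoring [Fintype V] (G : SimpleGraph V) (t : ℝ) {d : ℕ}
    (p : V → Fin d → ℝ) : Prop :=
  (∀ i, p i ⬝ᵥ p i = t - 1) ∧ ∀ i j, G.Adj i j → p i ⬝ᵥ p j ≤ -1

/-- The vector chromatic number: the least `t ≥ 1` admitting a vector `t`-coloring. -/
def vecChrom [Fintype V] (G : SimpleGraph V) : ℝ :=
  sInf {t : ℝ | 1 ≤ t ∧ ∃ (d : ℕ) (p : V → Fin d → ℝ), IsVecColoring G t p}

/-- A strict vector `t`-coloring: `p i ⬝ᵥ p j = -1` on edges. -/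
def IsStrictVecColoring [Fintype V] (G : SimpleGraph V) (t : ℝ) {d : ℕ}
    (p : V → Fin d → ℝ) : Prop :=
  (∀ i, p i ⬝ᵥ p i = t - 1) ∧ ∀ i j, G.Adj i j → p i ⬝ᵥ p j = -1

/-- The strict vector chromatic number. -/
def strictVecChrom [Fintype V] (G : SimpleGraph V) : ℝ :=
  sInf {t : ℝ | 1 ≤ t ∧ ∃ (d : ℕ) (p : V → Fin d → ℝ), IsStrictVecColoring G t p}

/-- The Gram matrix of a family of vectors. -/
def gramMat {d : ℕ} (p : V → Fin d → ℝ) : Matrix V V ℝ :=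
  Matrix.of fun i j => p i ⬝ᵥ p j

/-- `M` is the Gram matrix of an optimal vector coloring of `G`. -/
def IsOptGram [Fintype V] (G : SimpleGraph V) (M : Matrix V V ℝ) : Prop :=
  ∃ (d : ℕ) (p : V → Fin d → ℝ), IsVecColoring G (vecChrom G) p ∧ M = gramMat p

/-- `grk G = rk(G)`: the maximum rank of the Gram matrix of an optimal vector coloring. -/
def grk [Fintype V] (G : SimpleGraph V) : ℕ :=
  sSup {r : ℕ | ∃ M : Matrix V V ℝ, IsOptGram G M ∧ M.rank = r}

/-- The categorical (tensor) product of graphs. -/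
def catProd (G : SimpleGraph α) (H : SimpleGraph β) : SimpleGraph (α × β) where
  Adj x y := G.Adj x.1 y.1 ∧ H.Adj x.2 y.2
  symm := ⟨by intro x y hxy; exact ⟨hxy.1.symm, hxy.2.symm⟩⟩
  loopless := ⟨by intro x hx; exact G.irrefl hx.1⟩

/-- A feasible dual solution for `vecChrom G`. -/
def IsDualSol [Fintype V] (G : SimpleGraph V) (B : Matrix V V ℝ) : Prop :=
  B.PosSemidef ∧ (∀ i j, i ≠ j → ¬ G.Adj i j → B i j = 0) ∧
    (∀ i j, 0 ≤ B i j) ∧ B.trace = 1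

/-- An optimal dual solution for `vecChrom G`: feasible with objective value `vecChrom G`. -/
def IsOptDual [Fintype V] (G : SimpleGraph V) (B : Matrix V V ℝ) : Prop :=
  IsDualSol G B ∧ (∑ i, ∑ j, B i j) = vecChrom G

/-- The all-ones matrix `J`. -/
def allOnes (γ : Type*) : Matrix γ γ ℝ :=
  Matrix.of fun _ _ => 1

/-- The graph `G(B)` of a (symmetric) matrix `B`: distinct `i, j` adjacent iff `B i j ≠ 0`. -/
def matGraph (B : Matrix V V ℝ) : SimpleGraph V where
  Adj i j := i ≠ j ∧ B i j ≠ 0 ∧ B j i ≠ 0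
  symm := ⟨by intro i j hij; exact ⟨hij.1.symm, hij.2.2, hij.2.1⟩⟩
  loopless := ⟨by intro i hi; exact hi.1 rfl⟩

/-- The spanning subgraph `G^p` of edges tight in the vector coloring `p`. -/
def tightSub [Fintype V] (G : SimpleGraph V) {d : ℕ} (p : V → Fin d → ℝ) :
    SimpleGraph V where
  Adj i j := G.Adj i j ∧ p i ⬝ᵥ p j = -1
  symm := ⟨by
    intro i j hij
    exact ⟨hij.1.symm, by rw [dotProduct_comm]; exact hij.2⟩⟩
  loopless := ⟨by intro i hi; exact G.irrefl hi.1⟩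

/-- The skeleton `G^sk`: the spanning subgraph of edges tight in every optimal
vector coloring. -/
def skeleton [Fintype V] (G : SimpleGraph V) : SimpleGraph V where
  Adj i j := G.Adj i j ∧ ∀ (d : ℕ) (p : V → Fin d → ℝ),
      IsVecColoring G (vecChrom G) p → p i ⬝ᵥ p j = -1
  symm := ⟨by
    intro i j hij
    refine ⟨hij.1.symm, fun d p hp => ?_⟩
    rw [dotProduct_comm]
    exact hij.2 d p hp⟩
  loopless := ⟨by intro i hi; exact G.irrefl hi.1⟩

/-- `i` is neighborly in the vector coloring `p`: `-p i` lies in the conical hull of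
the vectors of the `∼_p`-neighbours of `i`. -/
def NeighborlyIn [Fintype V] (G : SimpleGraph V) {d : ℕ} (p : V → Fin d → ℝ)
    (i : V) : Prop :=
  ∃ c : V → ℝ, (∀ j, 0 ≤ c j) ∧ (∀ j, c j ≠ 0 → G.Adj i j ∧ p i ⬝ᵥ p j = -1) ∧
    -p i = ∑ j, c j • p j

/-- `i` is neighborly: neighborly in every optimal vector coloring. -/
def Neighborly [Fintype V] (G : SimpleGraph V) (i : V) : Prop :=
  ∀ (d : ℕ) (p : V → Fin d → ℝ), IsVecColoring G (vecChrom G) p → NeighborlyIn G p i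

/-- `i →_p j`: `-p i = ∑ α_l • p l` over `∼_p`-neighbours `l` of `i`, with `α_j > 0`. -/
def ArrowIn [Fintype V] (G : SimpleGraph V) {d : ℕ} (p : V → Fin d → ℝ)
    (i j : V) : Prop :=
  ∃ c : V → ℝ, (∀ l, 0 ≤ c l) ∧ (∀ l, c l ≠ 0 → G.Adj i l ∧ p i ⬝ᵥ p l = -1) ∧
    0 < c j ∧ -p i = ∑ l, c l • p l

/-- `μ` is an eigenvalue of `M`. -/
def IsEigenvalue [Fintype V] (M : Matrix V V ℝ) (μ : ℝ) : Prop :=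
  ∃ v : V → ℝ, v ≠ 0 ∧ M *ᵥ v = μ • v

/-- `lam` is the largest eigenvalue of `M`. -/
def IsMaxEigenvalue [Fintype V] (M : Matrix V V ℝ) (lam : ℝ) : Prop :=
  IsGreatest {μ : ℝ | IsEigenvalue M μ} lam

/-- `lam` is the smallest eigenvalue of `M`. -/
def IsMinEigenvalue [Fintype V] (M : Matrix V V ℝ) (lam : ℝ) : Prop :=
  IsLeast {μ : ℝ | IsEigenvalue M μ} lam

/-- The eigenspace of `M` for `μ`. -/
def eigSpace [Fintype V] (M : Matrix V V ℝ) (μ : ℝ) : Submodule ℝ (V → ℝ) :=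
  LinearMap.ker (M.mulVecLin - μ • (LinearMap.id : (V → ℝ) →ₗ[ℝ] V → ℝ))

/-- `W` is (the Gram matrix of) a convex combination of vector colorings of `G × H`
induced by `G` and by `H`: `W = a • (M ⊗ J) + b • (J ⊗ N)`. -/
def IsConvexCombInduced [Fintype α] [Fintype β] (G : SimpleGraph α) (H : SimpleGraph β)
    (W : Matrix (α × β) (α × β) ℝ) : Prop :=
  ∃ (a b : ℝ) (M : Matrix α α ℝ) (N : Matrix β β ℝ),
    0 ≤ a ∧ 0 ≤ b ∧ a + b = 1 ∧ IsOptGram G M ∧ IsOptGram H N ∧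
    W = a • (M ⊗ₖ allOnes β) + b • (allOnes α ⊗ₖ N)

end VectorColoring

noncomputable section VCDualAux

open Matrix

set_option linter.unusedSectionVars false
set_option maxHeartbeats 1600000

namespace VCDualAux

variable {V : Type*} [Fintype V] [DecidableEq V]

open scoped MatrixOrder in
lemma posSemidef_iff_eq_transpose_mul_self' {M : Matrix V V ℝ} :
    M.PosSemidef ↔ ∃ C : Matrix V V ℝ, M = Cᴴ * C := by
  constructor
  · intro h
    obtain ⟨C, hC⟩ := CStarAlgebra.nonneg_iff_eq_star_mul_self.mp h.nonneg
    exact ⟨C, hC⟩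
  · rintro ⟨C, rfl⟩
    exact Matrix.posSemidef_conjTranspose_mul_self C

lemma quadForm (M : Matrix V V ℝ) (x : V → ℝ) :
    x ⬝ᵥ (M *ᵥ x) = ∑ i, ∑ j, M i j * (x i * x j) := by
  simp only [dotProduct, mulVec, Finset.mul_sum]
  exact Finset.sum_congr rfl fun i _ => Finset.sum_congr rfl fun j _ => by ring

lemma isHermitian_of_symm {M : Matrix V V ℝ} (h : ∀ i j, M i j = M j i) : M.IsHermitian := by
  ext i j
  simpa [Matrix.conjTranspose_apply] using (h j i)

lemma herm_apply {M : Matrix V V ℝ} (h : M.IsHermitian) (i j : V) : M i j = M j i := by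
  have := congrFun (congrFun h j) i
  simpa [Matrix.conjTranspose_apply] using this

lemma star_id (x : V → ℝ) : star x = x := funext fun _ => rfl

lemma psd_of_form {M : Matrix V V ℝ} (h1 : M.IsHermitian)
    (h2 : ∀ x : V → ℝ, 0 ≤ ∑ i, ∑ j, M i j * (x i * x j)) : M.PosSemidef := by
  refine Matrix.PosSemidef.of_dotProduct_mulVec_nonneg h1 fun x => ?_
  rw [star_id, quadForm]; exact h2 x

lemma psd_form {M : Matrix V V ℝ} (hM : M.PosSemidef) (x : V → ℝ) :
    0 ≤ ∑ i, ∑ j, M i j * (x i * x j) := by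
  have := hM.dotProduct_mulVec_nonneg x
  rwa [star_id, quadForm] at this

lemma psd_smul {M : Matrix V V ℝ} (hM : M.PosSemidef) {a : ℝ} (ha : 0 ≤ a) :
    (a • M).PosSemidef := by
  refine psd_of_form (isHermitian_of_symm fun i j => by
    simp [herm_apply hM.1 i j]) fun x => ?_
  have h : ∑ i, ∑ j, (a • M) i j * (x i * x j) = a * ∑ i, ∑ j, M i j * (x i * x j) := by
    simp only [Matrix.smul_apply, smul_eq_mul, Finset.mul_sum]
    exact Finset.sum_congr rfl fun i _ => Finset.sum_congr rfl fun j _ => by ring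
  rw [h]
  exact mul_nonneg ha (psd_form hM x)

lemma rank1_psd (u : V → ℝ) : (Matrix.of fun i j => u i * u j).PosSemidef := by
  refine psd_of_form (isHermitian_of_symm fun i j => by simp [mul_comm]) fun x => ?_
  have h : ∑ i, ∑ j, (Matrix.of fun i j => u i * u j) i j * (x i * x j)
      = (∑ i, u i * x i) * (∑ j, u j * x j) := by
    rw [Finset.sum_mul_sum]
    exact Finset.sum_congr rfl fun i _ => Finset.sum_congr rfl fun j _ => by
      simp [Matrix.of_apply]; ring
  rw [h]
  exact mul_self_nonneg _

lemma sum_rot {γ : Type*} [Fintype γ] (f : V → V → γ → ℝ) :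
    ∑ i, ∑ j, ∑ k, f i j k = ∑ k, ∑ i, ∑ j, f i j k := by
  calc ∑ i, ∑ j, ∑ k, f i j k
      = ∑ i, ∑ k, ∑ j, f i j k := Finset.sum_congr rfl fun i _ => Finset.sum_comm
    _ = ∑ k, ∑ i, ∑ j, f i j k := Finset.sum_comm

lemma psd_hadamard {M N : Matrix V V ℝ} (hM : M.PosSemidef) (hN : N.PosSemidef) :
    (Matrix.of fun i j => M i j * N i j).PosSemidef := by
  obtain ⟨C, hC⟩ := posSemidef_iff_eq_transpose_mul_self'.mp hN
  have hN' : ∀ i j, N i j = ∑ k, C k i * C k j := by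
    intro i j
    rw [hC]
    simp [Matrix.mul_apply, Matrix.conjTranspose_apply]
  refine psd_of_form (isHermitian_of_symm fun i j => by
    simp [Matrix.of_apply, herm_apply hM.1 i j, herm_apply hN.1 i j]) fun x => ?_
  have key : ∑ i, ∑ j, (Matrix.of fun i j => M i j * N i j) i j * (x i * x j)
      = ∑ k, ∑ i, ∑ j, M i j * ((x i * C k i) * (x j * C k j)) := by
    rw [← sum_rot]
    refine Finset.sum_congr rfl fun i _ => Finset.sum_congr rfl fun j _ => ?_
    rw [Matrix.of_apply, hN', Finset.mul_sum, Finset.sum_mul]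
    exact Finset.sum_congr rfl fun k _ => by ring
  rw [key]
  exact Finset.sum_nonneg fun k _ => psd_form hM _

lemma psd_inner_nonneg {M N : Matrix V V ℝ} (hM : M.PosSemidef) (hN : N.PosSemidef) :
    0 ≤ ∑ i, ∑ j, M i j * N i j := by
  have := psd_form (psd_hadamard hM hN) (fun _ => 1)
  simpa using this

lemma gram_psd {d : ℕ} (p : V → Fin d → ℝ) : (gramMat p).PosSemidef := by
  refine psd_of_form (isHermitian_of_symm fun i j => by
    simp only [gramMat, Matrix.of_apply]; exact dotProduct_comm _ _) fun x => ?_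
  have h : ∑ i, ∑ j, gramMat p i j * (x i * x j)
      = ∑ k, ∑ i, ∑ j, (x i * p i k) * (x j * p j k) := by
    rw [← sum_rot]
    refine Finset.sum_congr rfl fun i _ => Finset.sum_congr rfl fun j _ => ?_
    show (p i ⬝ᵥ p j) * (x i * x j) = _
    rw [dotProduct, Finset.sum_mul]
    exact Finset.sum_congr rfl fun k _ => by ring
  rw [h]
  refine Finset.sum_nonneg fun k _ => ?_
  rw [← Finset.sum_mul_sum]
  exact mul_self_nonneg _

lemma exists_maxEig [Nonempty V] (S : Matrix V V ℝ) (hS : S.IsHermitian) :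
    ∃ (lam : ℝ) (v : V → ℝ), IsMaxEigenvalue S lam ∧ v ⬝ᵥ v = 1 ∧ S *ᵥ v = lam • v ∧
      ∀ x : V → ℝ, x ⬝ᵥ (S *ᵥ x) ≤ lam * (x ⬝ᵥ x) := by
  obtain ⟨i₀, -, hmax⟩ := Finset.exists_max_image (Finset.univ : Finset V) hS.eigenvalues
    ⟨Classical.arbitrary V, Finset.mem_univ _⟩
  set lam := hS.eigenvalues i₀ with hlam
  set v : V → ℝ := ⇑(hS.eigenvectorBasis i₀) with hv
  have heig : S *ᵥ v = lam • v := hS.mulVec_eigenvectorBasis i₀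
  have hnorm : v ⬝ᵥ v = 1 := by
    have h1 : ‖hS.eigenvectorBasis i₀‖ = 1 := hS.eigenvectorBasis.orthonormal.1 i₀
    have h2 : (inner ℝ (hS.eigenvectorBasis i₀) (hS.eigenvectorBasis i₀) : ℝ) = 1 := by
      rw [real_inner_self_eq_norm_sq, h1]; norm_num
    rw [PiLp.inner_apply] at h2
    rw [hv]
    simpa [dotProduct, RCLike.inner_apply, conj_trivial, sq] using h2
  have hpsd : ((lam • (1 : Matrix V V ℝ)) - S).PosSemidef := by
    have hdiagpsd : (Matrix.diagonal (fun i => lam - hS.eigenvalues i)).PosSemidef :=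
      Matrix.posSemidef_diagonal_iff.mpr fun i => by
        have := hmax i (Finset.mem_univ i); simp only [hlam]; linarith
    have hU : (hS.eigenvectorUnitary : Matrix V V ℝ) * star (hS.eigenvectorUnitary : Matrix V V ℝ)
        = 1 := (Matrix.mem_unitaryGroup_iff).mp (hS.eigenvectorUnitary).2
    have key : (hS.eigenvectorUnitary : Matrix V V ℝ) *
        Matrix.diagonal (fun i => lam - hS.eigenvalues i) *
        (star (hS.eigenvectorUnitary : Matrix V V ℝ)) = lam • (1 : Matrix V V ℝ) - S := by
      have hdiag : Matrix.diagonal (fun i => lam - hS.eigenvalues i)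
          = lam • (1 : Matrix V V ℝ) - Matrix.diagonal (RCLike.ofReal ∘ hS.eigenvalues) := by
        ext i j
        by_cases h : i = j <;>
          simp [h, Matrix.diagonal_apply, Matrix.one_apply, Matrix.smul_apply]
      rw [hdiag, Matrix.mul_sub, Matrix.sub_mul]
      rw [Matrix.mul_smul, Matrix.mul_one, Matrix.smul_mul, hU]
      have hsp := hS.spectral_theorem
      rw [Unitary.conjStarAlgAut_apply] at hsp
      rw [← hsp]
    have := hdiagpsd.mul_mul_conjTranspose_same (hS.eigenvectorUnitary : Matrix V V ℝ)
    rw [← Matrix.star_eq_conjTranspose, key] at this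
    exact this
  have hray : ∀ x : V → ℝ, x ⬝ᵥ (S *ᵥ x) ≤ lam * (x ⬝ᵥ x) := by
    intro x
    have h0 := hpsd.dotProduct_mulVec_nonneg x
    rw [star_id, Matrix.sub_mulVec, dotProduct_sub, Matrix.smul_mulVec,
      Matrix.one_mulVec, dotProduct_smul, smul_eq_mul] at h0
    linarith
  refine ⟨lam, v, ⟨⟨v, ?_, heig⟩, ?_⟩, hnorm, heig, hray⟩
  · intro h0; rw [h0] at hnorm; simp [dotProduct] at hnorm
  · rintro μ ⟨w, hw0, hw⟩
    have h1 : μ * (w ⬝ᵥ w) ≤ lam * (w ⬝ᵥ w) := by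
      have := hray w; rwa [hw, dotProduct_smul, smul_eq_mul] at this
    have h2 : 0 < w ⬝ᵥ w := by
      obtain ⟨i, hi⟩ := Function.ne_iff.mp hw0
      exact Finset.sum_pos' (fun j _ => mul_self_nonneg _)
        ⟨i, Finset.mem_univ i, mul_self_pos.mpr hi⟩
    exact le_of_mul_le_mul_right h1 h2

def TSet (G : SimpleGraph V) : Set ℝ :=
  {t : ℝ | 1 ≤ t ∧ ∃ (d : ℕ) (p : V → Fin d → ℝ), IsVecColoring G t p}

lemma vecChrom_def (G : SimpleGraph V) : vecChrom G = sInf (TSet G) := rfl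

lemma TSet_bddBelow (G : SimpleGraph V) : BddBelow (TSet G) := ⟨1, fun _ ht => ht.1⟩

lemma mem_TSet_of_matrix (G : SimpleGraph V) [Nonempty V] {M : Matrix V V ℝ} {t : ℝ}
    (hpsd : M.PosSemidef) (hdiag : ∀ i, M i i ≤ t - 1)
    (hedge : ∀ i j, G.Adj i j → M i j ≤ -1) : t ∈ TSet G := by
  set M' := M + Matrix.diagonal (fun i => t - 1 - M i i) with hM'
  have hpsd' : M'.PosSemidef := by
    refine hpsd.add (Matrix.PosSemidef.diagonal ?_)
    intro i
    simp only [Pi.zero_apply]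
    linarith [hdiag i]
  have hdiag' : ∀ i, M' i i = t - 1 := by
    intro i
    simp [hM', Matrix.add_apply, Matrix.diagonal_apply_eq]
  have hoff : ∀ i j, i ≠ j → M' i j = M i j := by
    intro i j hij
    simp [hM', Matrix.add_apply, Matrix.diagonal_apply_ne _ hij]
  obtain ⟨C, hC⟩ := posSemidef_iff_eq_transpose_mul_self'.mp hpsd'
  set e := (Fintype.equivFin V).symm with he
  set p : V → Fin (Fintype.card V) → ℝ := fun i k => C (e k) i with hp
  have hdot : ∀ i j, p i ⬝ᵥ p j = M' i j := by
    intro i j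
    rw [dotProduct]
    have h : ∑ k, p i k * p j k = ∑ v, C v i * C v j := Equiv.sum_comp e (fun v => C v i * C v j)
    rw [h, hC]
    simp [Matrix.mul_apply, Matrix.conjTranspose_apply]
  have h1t : 1 ≤ t := by
    have i := Classical.arbitrary V
    have h0 : 0 ≤ p i ⬝ᵥ p i := Finset.sum_nonneg fun k _ => mul_self_nonneg _
    rw [hdot, hdiag'] at h0
    linarith
  refine ⟨h1t, Fintype.card V, p, fun i => by rw [hdot, hdiag'], fun i j hadj => ?_⟩
  rw [hdot, hoff i j (G.ne_of_adj hadj)]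
  exact hedge i j hadj

lemma hatM_psd [Nonempty V] :
    (Matrix.of fun i j : V => if i = j then 2 * (Fintype.card V : ℝ) - 2 else -2).PosSemidef := by
  set n : ℝ := (Fintype.card V : ℝ) with hn
  refine psd_of_form (isHermitian_of_symm fun i j => by
    by_cases h : i = j <;> simp [Matrix.of_apply, h, eq_comm]) fun x => ?_
  have h1 : ∀ i j : V, (Matrix.of fun i j : V => if i = j then 2 * n - 2 else -2) i j * (x i * x j)
      = (if j = i then 2 * n * (x i * x j) else 0) - 2 * (x i * x j) := by
    intro i j
    by_cases h : i = j
    · subst h; simp [Matrix.of_apply]; ring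
    · simp [Matrix.of_apply, h, Ne.symm h]
  have h2 : ∑ i, ∑ j, (Matrix.of fun i j : V => if i = j then 2 * n - 2 else -2) i j * (x i * x j)
      = 2 * n * (∑ i, x i * x i) - 2 * ((∑ i, x i) * (∑ i, x i)) := by
    simp only [h1, Finset.sum_sub_distrib]
    congr 1
    · rw [Finset.mul_sum]
      refine Finset.sum_congr rfl fun i _ => ?_
      rw [Finset.sum_ite_eq' Finset.univ i (fun j => 2 * n * (x i * x j))]
      simp
    · rw [Finset.sum_mul_sum, Finset.mul_sum]
      exact Finset.sum_congr rfl fun i _ => by rw [← Finset.mul_sum]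
  rw [h2]
  have h3 : (∑ i, x i) ^ 2 ≤ (((Finset.univ : Finset V).card : ℝ)) * ∑ i, x i ^ 2 := by
    exact_mod_cast sq_sum_le_card_mul_sum_sq (s := (Finset.univ : Finset V)) (f := x)
  have hcard : ((Finset.univ : Finset V).card : ℝ) = n := by rw [hn]; norm_num [Finset.card_univ]
  rw [hcard] at h3
  have h4 : ∑ i, x i * x i = ∑ i, x i ^ 2 := Finset.sum_congr rfl fun i _ => by ring
  have h5 : (∑ i, x i) * (∑ i, x i) = (∑ i, x i) ^ 2 := by ring
  rw [h4, h5]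
  linarith

lemma TSet_nonempty (G : SimpleGraph V) [Nonempty V] :
    (2 * (Fintype.card V : ℝ) - 1) ∈ TSet G := by
  refine mem_TSet_of_matrix G hatM_psd
    (fun i => by simp [Matrix.of_apply]; linarith) (fun i j hadj => ?_)
  simp [Matrix.of_apply, G.ne_of_adj hadj]

lemma weak_duality (G : SimpleGraph V) [Nonempty V] {A : Matrix V V ℝ}
    (hsupp : ∀ i j, ¬ G.Adj i j → A i j = 0) (hnn : ∀ i j, 0 ≤ A i j)
    (hpsd : ((1 : Matrix V V ℝ) + A).PosSemidef) {lam t : ℝ}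
    (hlam : IsMaxEigenvalue ((1 : Matrix V V ℝ) + A) lam) (ht : t ∈ TSet G) : lam ≤ t := by
  obtain ⟨ht1, d, p, hp1, hp2⟩ := ht
  obtain ⟨lam', v, hmax', hv1, hveig, hray⟩ := exists_maxEig _ hpsd.1
  have hll : lam = lam' := hlam.unique hmax'
  rw [hll]
  set S := (1 : Matrix V V ℝ) + A with hS
  have hAii : ∀ i, A i i = 0 := fun i => hsupp i i (G.irrefl)
  have hSnn : ∀ i j, 0 ≤ S i j := by
    intro i j
    by_cases h : i = j
    · subst h; simp [hS, Matrix.add_apply, Matrix.one_apply_eq]; linarith [hnn i i]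
    · simp [hS, Matrix.add_apply, Matrix.one_apply_ne h]; linarith [hnn i j]
  set u : V → ℝ := fun i => |v i| with hu
  have hu1 : u ⬝ᵥ u = 1 := by
    rw [dotProduct] at hv1 ⊢
    simpa [hu, abs_mul_abs_self] using hv1
  have hvSv : v ⬝ᵥ (S *ᵥ v) = lam' := by
    rw [hveig, dotProduct_smul, smul_eq_mul, hv1, mul_one]
  have hle : lam' ≤ u ⬝ᵥ (S *ᵥ u) := by
    rw [← hvSv, quadForm, quadForm]
    refine Finset.sum_le_sum fun i _ => Finset.sum_le_sum fun j _ => ?_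
    have h1 : v i * v j ≤ u i * u j := by
      rw [hu]; rw [← abs_mul]; exact le_abs_self _
    exact mul_le_mul_of_nonneg_left h1 (hSnn i j)
  have hge : u ⬝ᵥ (S *ᵥ u) ≤ lam' := by
    have := hray u; rwa [hu1, mul_one] at this
  have huSu : u ⬝ᵥ (S *ᵥ u) = lam' := le_antisymm hge hle
  set B : Matrix V V ℝ := Matrix.of fun i j => (u i * u j) * S i j with hB
  have hBnn : ∀ i j, 0 ≤ B i j :=
    fun i j => mul_nonneg (mul_nonneg (abs_nonneg _) (abs_nonneg _)) (hSnn i j)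
  have hBpsd : B.PosSemidef := psd_hadamard (rank1_psd u) hpsd
  have hkey : (0 : ℝ) ≤ ∑ i, ∑ j, gramMat p i j * B i j := psd_inner_nonneg (gram_psd p) hBpsd
  have hBii : ∀ i, B i i = u i * u i := by
    intro i; simp [hB, hS, Matrix.add_apply, Matrix.one_apply_eq, hAii i]
  have hbound : ∑ i, ∑ j, gramMat p i j * B i j
      ≤ ∑ i, ∑ j, ((if i = j then t * B i j else 0) - B i j) := by
    refine Finset.sum_le_sum fun i _ => Finset.sum_le_sum fun j _ => ?_
    by_cases h : i = j
    · subst h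
      have hg : gramMat p i i = t - 1 := hp1 i
      rw [hg, if_pos rfl]
      ring_nf
      exact le_refl _
    · rw [if_neg h]
      by_cases hadj : G.Adj i j
      · have h1 : gramMat p i j ≤ -1 := hp2 i j hadj
        nlinarith [hBnn i j]
      · have hB0 : B i j = 0 := by
          simp [hB, hS, Matrix.add_apply, Matrix.one_apply_ne h, hsupp i j hadj]
        simp [hB0]
  have e1 : ∑ i, ∑ j, (if i = j then t * B i j else 0) = t * ∑ i, B i i := by
    rw [Finset.mul_sum]
    refine Finset.sum_congr rfl fun i _ => ?_
    rw [Finset.sum_ite_eq Finset.univ i (fun j => t * B i j)]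
    simp
  have e2 : ∑ i, B i i = 1 := by
    rw [Finset.sum_congr rfl fun i _ => hBii i]
    rw [dotProduct] at hu1
    exact hu1
  have e3 : ∑ i, ∑ j, B i j = lam' := by
    rw [← huSu, quadForm]
    exact Finset.sum_congr rfl fun i _ => Finset.sum_congr rfl fun j _ => by
      simp [hB]; ring
  have e4 : ∑ i, ∑ j, ((if i = j then t * B i j else 0) - B i j) = t - lam' := by
    simp only [Finset.sum_sub_distrib]
    rw [e1, e2, e3, mul_one]
  linarith [hkey, hbound, e4 ▸ hbound]

lemma aux_le {α γ c : ℝ} (h : ∀ s : ℝ, 0 < s → α + s * γ < c) : γ ≤ 0 := by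
  by_contra hγ
  push_neg at hγ
  have h1 := h 1 one_pos
  have hca : 0 < c - α := by linarith
  have h2 := h ((c - α) / γ) (div_pos hca hγ)
  rw [div_mul_cancel₀ _ (ne_of_gt hγ)] at h2
  linarith

lemma aux_ge {α γ c : ℝ} (h : ∀ s : ℝ, 0 < s → c ≤ α + s * γ) : 0 ≤ γ := by
  by_contra hγ
  push_neg at hγ
  have h1 := h 1 one_pos
  have hs : 0 < (c - α - 1) / γ := div_pos_of_neg_of_neg (by linarith) hγ
  have h2 := h _ hs
  rw [div_mul_cancel₀ _ (ne_of_lt hγ)] at h2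
  linarith

lemma aux_eq {α γ c : ℝ} (h : ∀ s : ℝ, c ≤ α + s * γ) : γ = 0 := by
  have h1 : 0 ≤ γ := aux_ge (fun s _ => h s)
  have h2 : 0 ≤ -γ := aux_ge (fun s _ => (h (-s)).trans_eq (by ring))
  linarith

lemma aux_sup {x c K : ℝ} (h : ∀ ε : ℝ, 0 < ε → x ≤ c + ε * K) : x ≤ c := by
  rcases le_or_gt K 0 with hK | hK
  · have := h 1 one_pos; nlinarith
  · refine le_of_forall_pos_le_add fun δ hδ => ?_
    have := h (δ / K) (div_pos hδ hK)
    rwa [div_mul_cancel₀ _ (ne_of_gt hK)] at this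

lemma sum_ind (g : V → V → ℝ) (a b : V) :
    ∑ i, ∑ j, g i j * (if i = a ∧ j = b then (1:ℝ) else 0) = g a b := by
  rw [Finset.sum_eq_single a]
  · rw [Finset.sum_eq_single b]
    · simp
    · intro j _ hj; simp [hj]
    · intro h; exact absurd (Finset.mem_univ b) h
  · intro i _ hi
    apply Finset.sum_eq_zero; intro j _; simp [hi]
  · intro h; exact absurd (Finset.mem_univ a) h

lemma sum_diag_ind (g : V → V → ℝ) :
    ∑ i, ∑ j, (if i = j then (1:ℝ) else 0) * g i j = ∑ i, g i i := by
  refine Finset.sum_congr rfl fun i _ => ?_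
  rw [Finset.sum_eq_single i]
  · simp
  · intro j _ hj; simp [Ne.symm hj]
  · intro h; exact absurd (Finset.mem_univ i) h

lemma single_decomp (w : V → V → ℝ) :
    ∑ i, ∑ j, w i j • (Pi.single i (Pi.single j (1:ℝ)) : V → V → ℝ) = w := by
  funext a b
  have h1 : (∑ i, ∑ j, w i j • (Pi.single i (Pi.single j (1:ℝ)) : V → V → ℝ)) a b
      = ∑ i, ∑ j, w i j * ((Pi.single i (Pi.single j (1:ℝ)) : V → V → ℝ) a b) := by
    rw [Finset.sum_apply, Finset.sum_apply]
    refine Finset.sum_congr rfl fun i _ => ?_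
    rw [Finset.sum_apply, Finset.sum_apply]
    refine Finset.sum_congr rfl fun j _ => ?_
    simp
  have h2 : ∀ i j, ((Pi.single i (Pi.single j (1:ℝ)) : V → V → ℝ)) a b
      = if i = a ∧ j = b then (1:ℝ) else 0 := by
    intro i j
    rcases eq_or_ne i a with h | h
    · subst h
      rcases eq_or_ne j b with h' | h'
      · subst h'; simp [Pi.single_eq_same]
      · simp [Pi.single_eq_same, Pi.single_eq_of_ne (Ne.symm h'), h']
    · simp [Pi.single_eq_of_ne (Ne.symm h), h]
  rw [h1, Finset.sum_congr rfl fun i _ => Finset.sum_congr rfl fun j _ => by rw [h2 i j]]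
  exact sum_ind w a b

lemma exists_good_dual (G : SimpleGraph V) [Nonempty V] :
    ∃ B : Matrix V V ℝ, B.PosSemidef ∧ (∀ i j, i ≠ j → ¬ G.Adj i j → B i j = 0) ∧
      (∀ i j, 0 ≤ B i j) ∧ (∑ i, B i i) = 1 ∧ vecChrom G ≤ ∑ i, ∑ j, B i j := by
  set tstar := vecChrom G with htstar
  set O : Set (ℝ × (V → V → ℝ)) := {q | q.1 < tstar ∧ ∀ i j, q.2 i j < 0} with hO
  set S : Set (ℝ × (V → V → ℝ)) := {q | ∃ M : Matrix V V ℝ, M.PosSemidef ∧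
      (∀ i, M i i - q.1 + 1 ≤ q.2 i i) ∧ (∀ i j, G.Adj i j → M i j + 1 ≤ q.2 i j)} with hSdef
  have hOconv : Convex ℝ O := by
    intro x hx y hy a b ha hb hab
    refine ⟨?_, fun i j => ?_⟩
    · exact (convex_Iio tstar) hx.1 hy.1 ha hb hab
    · exact (convex_Iio (0:ℝ)) (hx.2 i j) (hy.2 i j) ha hb hab
  have hOopen : IsOpen O := by
    have h1 : IsOpen {q : ℝ × (V → V → ℝ) | q.1 < tstar} :=
      isOpen_lt continuous_fst continuous_const
    have hc : ∀ i j : V, Continuous (fun q : ℝ × (V → V → ℝ) => q.2 i j) := fun i j => by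
      fun_prop
    have h2 : ∀ i j : V, IsOpen {q : ℝ × (V → V → ℝ) | q.2 i j < 0} := fun i j =>
      isOpen_lt (hc i j) continuous_const
    have he : O = {q : ℝ × (V → V → ℝ) | q.1 < tstar}
        ∩ ⋂ i, ⋂ j, {q : ℝ × (V → V → ℝ) | q.2 i j < 0} := by
      ext q; simp [hO, Set.mem_iInter]
    rw [he]
    exact h1.inter (isOpen_iInter_of_finite fun i => isOpen_iInter_of_finite fun j => h2 i j)
  have hSconv : Convex ℝ S := by
    rintro x ⟨M, hM, hMd, hMe⟩ y ⟨N, hN, hNd, hNe⟩ a b ha hb hab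
    refine ⟨a • M + b • N, (psd_smul hM ha).add (psd_smul hN hb), fun i => ?_, fun i j hadj => ?_⟩
    · have h1 := mul_le_mul_of_nonneg_left (hMd i) ha
      have h2 := mul_le_mul_of_nonneg_left (hNd i) hb
      show (a • M + b • N) i i - (a • x + b • y).1 + 1 ≤ (a • x + b • y).2 i i
      have e1 : (a • M + b • N) i i = a * M i i + b * N i i := rfl
      have e2 : (a • x + b • y).1 = a * x.1 + b * y.1 := rfl
      have e3 : (a • x + b • y).2 i i = a * x.2 i i + b * y.2 i i := rfl
      rw [e1, e2, e3]
      nlinarith [h1, h2, hab]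
    · have h1 := mul_le_mul_of_nonneg_left (hMe i j hadj) ha
      have h2 := mul_le_mul_of_nonneg_left (hNe i j hadj) hb
      show (a • M + b • N) i j + 1 ≤ (a • x + b • y).2 i j
      have e1 : (a • M + b • N) i j = a * M i j + b * N i j := rfl
      have e3 : (a • x + b • y).2 i j = a * x.2 i j + b * y.2 i j := rfl
      rw [e1, e3]
      nlinarith [h1, h2, hab]
  have hdisj : Disjoint O S := by
    rw [Set.disjoint_left]
    rintro q ⟨hq1, hq2⟩ ⟨M, hM, hMd, hMe⟩
    have hmem : q.1 ∈ TSet G := mem_TSet_of_matrix G hM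
      (fun i => by have := hMd i; have := hq2 i i; linarith)
      (fun i j hadj => by have := hMe i j hadj; have := hq2 i j; linarith)
    have hts : tstar ≤ q.1 := by
      rw [htstar, vecChrom_def]; exact csInf_le (TSet_bddBelow G) hmem
    linarith
  obtain ⟨f, c, hfO, hfS⟩ := geometric_hahn_banach_open hOconv hOopen hSconv hdisj
  set β := f (1, 0) with hβ
  set z : V → V → ℝ := fun i j => f (0, Pi.single i (Pi.single j 1)) with hz
  have hfq : ∀ q : ℝ × (V → V → ℝ), f q = q.1 * β + ∑ i, ∑ j, q.2 i j * z i j := by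
    intro q
    have hdecomp : q = q.1 • ((1 : ℝ), (0 : V → V → ℝ))
        + ∑ i, ∑ j, q.2 i j • (((0:ℝ), Pi.single i (Pi.single j (1:ℝ))) : ℝ × (V → V → ℝ)) := by
      obtain ⟨q1, q2⟩ := q
      rw [Prod.ext_iff]
      constructor
      · simp [Prod.fst_sum]
      · simp [Prod.snd_sum, single_decomp q2]
    conv_lhs => rw [hdecomp]
    rw [map_add, _root_.map_smul, map_sum]
    simp only [map_sum, _root_.map_smul, smul_eq_mul]
    rfl
  have hO' : ∀ t : ℝ, t < tstar → ∀ w : V → V → ℝ, (∀ i j, w i j < 0) →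
      t * β + ∑ i, ∑ j, w i j * z i j < c := by
    intro t ht w hw
    have := hfO (t, w) ⟨ht, hw⟩
    rwa [hfq] at this
  have hS' : ∀ (M : Matrix V V ℝ), M.PosSemidef → ∀ t : ℝ, ∀ w : V → V → ℝ,
      (∀ i, M i i - t + 1 ≤ w i i) → (∀ i j, G.Adj i j → M i j + 1 ≤ w i j) →
      c ≤ t * β + ∑ i, ∑ j, w i j * z i j := by
    intro M hM t w h1 h2
    have := hfS (t, w) ⟨M, hM, h1, h2⟩
    rwa [hfq] at this
  have htstar1 : 1 ≤ tstar := by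
    rw [htstar, vecChrom_def]
    exact le_csInf ⟨_, TSet_nonempty G⟩ fun t ht => ht.1
  have hz_nonneg : ∀ a b, 0 ≤ z a b := by
    intro a b
    have key : ∀ s : ℝ, 0 < s → ((tstar - 1) * β - ∑ i, ∑ j, z i j) + s * (-(z a b)) < c := by
      intro s hs
      have hcalc : ∑ i, ∑ j, ((-s) * (if i = a ∧ j = b then (1:ℝ) else 0) - 1) * z i j
          = (-s) * z a b - ∑ i, ∑ j, z i j := by
        have e : ∀ i j, ((-s) * (if i = a ∧ j = b then (1:ℝ) else 0) - 1) * z i j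
            = (-s) * (z i j * (if i = a ∧ j = b then (1:ℝ) else 0)) - z i j := by
          intro i j; ring
        simp only [e, Finset.sum_sub_distrib, ← Finset.mul_sum]
        rw [sum_ind]
      have h := hO' (tstar - 1) (by linarith)
        (fun i j => (-s) * (if i = a ∧ j = b then (1:ℝ) else 0) - 1)
        (fun i j => by by_cases h : i = a ∧ j = b <;> simp [h] <;> linarith)
      rw [hcalc] at h
      linarith
    have := aux_le key
    linarith
  have hβ_nonneg : 0 ≤ β := by
    have key : ∀ s : ℝ, 0 < s → (tstar * β - ∑ i, ∑ j, z i j) + s * (-β) < c := by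
      intro s hs
      have h := hO' (tstar - s) (by linarith) (fun _ _ => -1) (fun i j => by norm_num)
      have hsum : ∑ i : V, ∑ j : V, (-1 : ℝ) * z i j = -∑ i : V, ∑ j : V, z i j := by
        simp [Finset.sum_neg_distrib]
      rw [hsum] at h
      have e : (tstar - s) * β = tstar * β - s * β := by ring
      rw [e] at h
      linarith
    linarith [aux_le key]
  have hβc : tstar * β ≤ c := by
    have key : ∀ ε : ℝ, 0 < ε → tstar * β ≤ c + ε * (β + ∑ i, ∑ j, z i j) := by
      intro ε hε
      have h := hO' (tstar - ε) (by linarith) (fun _ _ => -ε)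
        (fun i j => by show -ε < 0; linarith)
      have hsum : ∑ i : V, ∑ j : V, (-ε) * z i j = -ε * ∑ i : V, ∑ j : V, z i j := by
        simp only [← Finset.mul_sum]
      rw [hsum] at h
      nlinarith [h]
    exact aux_sup key
  have hz_off : ∀ a b, a ≠ b → ¬ G.Adj a b → z a b = 0 := by
    intro a b hab hnadj
    have key : ∀ s : ℝ, c ≤ ((∑ i, ∑ j, z i j) - z a b) + s * z a b := by
      intro s
      have h := hS' 0 Matrix.PosSemidef.zero 0
        (fun i j => (s - 1) * (if i = a ∧ j = b then (1:ℝ) else 0) + 1)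
        (fun i => by
          have hne : ¬(i = a ∧ i = b) := fun ⟨h1, h2⟩ => hab (h1.symm.trans h2)
          show (0:Matrix V V ℝ) i i - 0 + 1 ≤ (s - 1) * (if i = a ∧ i = b then (1:ℝ) else 0) + 1
          simp [Matrix.zero_apply, hne])
        (fun i j hadj => by
          have hne : ¬(i = a ∧ j = b) := by
            rintro ⟨h1, h2⟩; subst h1; subst h2; exact hnadj hadj
          show (0:Matrix V V ℝ) i j + 1 ≤ (s - 1) * (if i = a ∧ j = b then (1:ℝ) else 0) + 1
          simp [Matrix.zero_apply, hne])
      have hsum : ∑ i, ∑ j, ((s - 1) * (if i = a ∧ j = b then (1:ℝ) else 0) + 1) * z i j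
          = (s - 1) * z a b + ∑ i, ∑ j, z i j := by
        have e : ∀ i j, ((s - 1) * (if i = a ∧ j = b then (1:ℝ) else 0) + 1) * z i j
            = (s - 1) * (z i j * (if i = a ∧ j = b then (1:ℝ) else 0)) + z i j := by
          intro i j; ring
        simp only [e, Finset.sum_add_distrib, ← Finset.mul_sum]
        rw [sum_ind]
      rw [hsum] at h
      linarith
    exact aux_eq key
  have hstar : ∀ (M : Matrix V V ℝ), M.PosSemidef → ∀ t : ℝ,
      c ≤ t * (β - ∑ i, z i i) + ∑ i, ∑ j, (M i j + 1) * z i j := by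
    intro M hM t
    have h := hS' M hM t (fun i j => if i = j then M i i - t + 1 else M i j + 1)
      (fun i => by show M i i - t + 1 ≤ if i = i then M i i - t + 1 else M i i + 1; simp)
      (fun i j hadj => by
        show M i j + 1 ≤ if i = j then M i i - t + 1 else M i j + 1
        rw [if_neg (G.ne_of_adj hadj)])
    have hsum : ∑ i, ∑ j, (if i = j then M i i - t + 1 else M i j + 1) * z i j
        = ∑ i, ∑ j, (M i j + 1) * z i j - t * ∑ i, z i i := by
      have e : ∀ i j, (if i = j then M i i - t + 1 else M i j + 1) * z i j
          = (M i j + 1) * z i j - t * ((if i = j then (1:ℝ) else 0) * z i j) := by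
        intro i j
        by_cases h : i = j
        · subst h; simp; ring
        · simp [h]
      simp only [e, Finset.sum_sub_distrib, ← Finset.mul_sum]
      rw [sum_diag_ind]
    rw [hsum] at h
    nlinarith [h]
  have hzero_sum : ∑ i : V, ∑ j : V, ((0 : Matrix V V ℝ) i j + 1) * z i j
      = ∑ i : V, ∑ j : V, z i j := by simp
  have htrace : β = ∑ i, z i i := by
    have key : ∀ t : ℝ, c ≤ (∑ i, ∑ j, z i j) + t * (β - ∑ i, z i i) := fun t => by
      have := hstar 0 Matrix.PosSemidef.zero t
      rw [hzero_sum] at this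
      linarith
    have := aux_eq key
    linarith
  have hcσ : c ≤ ∑ i, ∑ j, z i j := by
    have := hstar 0 Matrix.PosSemidef.zero 0
    rw [hzero_sum] at this
    linarith
  have hquad : ∀ x : V → ℝ, 0 ≤ ∑ i, ∑ j, z i j * (x i * x j) := by
    intro x
    have key : ∀ s : ℝ, 0 < s →
        c ≤ (∑ i, ∑ j, z i j) + s * (∑ i, ∑ j, z i j * (x i * x j)) := by
      intro s hs
      have h := hstar (s • Matrix.of fun i j => x i * x j) (psd_smul (rank1_psd x) hs.le) 0
      have hsum : ∑ i, ∑ j, ((s • Matrix.of fun i j => x i * x j) i j + 1) * z i j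
          = s * (∑ i, ∑ j, z i j * (x i * x j)) + ∑ i, ∑ j, z i j := by
        have e : ∀ i j, ((s • Matrix.of fun i j => x i * x j) i j + 1) * z i j
            = s * (z i j * (x i * x j)) + z i j := by
          intro i j; simp only [Matrix.smul_apply, Matrix.of_apply, smul_eq_mul]; ring
        simp only [e, Finset.sum_add_distrib, ← Finset.mul_sum]
      rw [hsum] at h
      linarith
    exact aux_ge key
  have hβ_pos : 0 < β := by
    rcases lt_or_eq_of_le hβ_nonneg with h | h
    · exact h
    · exfalso
      have hsum0 : ∑ i, z i i = 0 := by rw [← htrace, ← h]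
      have h1 := hstar (Matrix.of fun i j : V => if i = j then 2*(Fintype.card V:ℝ) - 2 else -2)
        hatM_psd 0
      have hsum : ∑ i, ∑ j,
          ((Matrix.of fun i j : V => if i = j then 2*(Fintype.card V:ℝ) - 2 else -2) i j + 1) * z i j
          = 2*(Fintype.card V:ℝ) * (∑ i, z i i) - ∑ i, ∑ j, z i j := by
        have e : ∀ i j : V,
            ((Matrix.of fun i j : V => if i = j then 2*(Fintype.card V:ℝ) - 2 else -2) i j + 1) * z i j
            = 2*(Fintype.card V:ℝ) * ((if i = j then (1:ℝ) else 0) * z i j) - z i j := by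
          intro i j
          by_cases hij : i = j
          · subst hij
            rw [show (Matrix.of fun i j : V => if i = j then 2*(Fintype.card V:ℝ) - 2 else -2) i i
                = 2*(Fintype.card V:ℝ) - 2 from by simp,
              show (if i = i then (1:ℝ) else 0) = 1 from by simp]
            ring
          · simp only [Matrix.of_apply, if_neg hij]; ring
        simp only [e, Finset.sum_sub_distrib, ← Finset.mul_sum]
        rw [sum_diag_ind]
      rw [hsum, hsum0] at h1
      -- h1 : c ≤ 0 * (β - Σ z i i) + (2n * 0 - σ)
      have hfa := hO' (tstar - 1) (by linarith) (fun _ _ => -1) (fun _ _ => by norm_num)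
      have e2 : ∑ i : V, ∑ j : V, (-1 : ℝ) * z i j = -∑ i : V, ∑ j : V, z i j := by
        simp [Finset.sum_neg_distrib]
      rw [e2, ← h] at hfa
      -- hfa : (tstar - 1) * 0 + (- σ) < c
      nlinarith [h1, hfa]
  have hβne : β ≠ 0 := ne_of_gt hβ_pos
  refine ⟨Matrix.of fun i j => (z i j + z j i) / (2 * β), ?_, ?_, ?_, ?_, ?_⟩
  · refine psd_of_form (isHermitian_of_symm fun i j => by
      simp only [Matrix.of_apply]; ring) fun x => ?_
    have e0 : ∀ i j, (Matrix.of fun i j => (z i j + z j i) / (2 * β)) i j * (x i * x j)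
        = (1/(2*β)) * (z i j * (x i * x j)) + (1/(2*β)) * (z j i * (x i * x j)) := by
      intro i j; simp only [Matrix.of_apply]; field_simp
    have hQ2 : ∑ i, ∑ j, z j i * (x i * x j) = ∑ i, ∑ j, z i j * (x i * x j) := by
      rw [Finset.sum_comm]
      exact Finset.sum_congr rfl fun i _ => Finset.sum_congr rfl fun j _ => by ring
    simp only [e0, Finset.sum_add_distrib, ← Finset.mul_sum]
    rw [hQ2]
    have hq := hquad x
    have h12 : 0 ≤ 1/(2*β) := by positivity
    nlinarith [hq, h12]
  · intro i j hij hnadj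
    have h1 := hz_off i j hij hnadj
    have h2 := hz_off j i (Ne.symm hij) (fun hadj => hnadj hadj.symm)
    simp [Matrix.of_apply, h1, h2]
  · intro i j
    have := hz_nonneg i j
    have := hz_nonneg j i
    have : 0 ≤ z i j + z j i := by linarith [hz_nonneg i j, hz_nonneg j i]
    exact div_nonneg this (by linarith)
  · have e : ∀ i, (Matrix.of fun i j => (z i j + z j i) / (2 * β)) i i = z i i / β := by
      intro i; simp only [Matrix.of_apply]; field_simp; ring
    rw [Finset.sum_congr rfl fun i _ => e i, ← Finset.sum_div, ← htrace,
      div_self hβne]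
  · have e0 : ∀ i j, (Matrix.of fun i j => (z i j + z j i) / (2 * β)) i j
        = z i j / (2*β) + z j i / (2*β) := by
      intro i j; simp only [Matrix.of_apply]; ring
    have h1 : ∑ i : V, ∑ j : V, z i j / (2*β) = (∑ i : V, ∑ j : V, z i j)/(2*β) := by
      simp [← Finset.sum_div]
    have h2 : ∑ i : V, ∑ j : V, z j i / (2*β) = (∑ i : V, ∑ j : V, z i j)/(2*β) := by
      rw [Finset.sum_comm]
      simp [← Finset.sum_div]
    have e : ∑ i, ∑ j, (Matrix.of fun i j => (z i j + z j i) / (2 * β)) i j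
        = (∑ i, ∑ j, z i j) / β := by
      simp only [e0, Finset.sum_add_distrib]
      rw [h1, h2]
      field_simp
      ring
    rw [e, le_div_iff₀ hβ_pos]
    calc vecChrom G * β = tstar * β := by rw [htstar]
      _ ≤ c := hβc
      _ ≤ ∑ i, ∑ j, z i j := hcσ

lemma psd_row_zero {B : Matrix V V ℝ} (hB : B.PosSemidef) {a : V} (ha : B a a = 0) (b : V) :
    B a b = 0 := by
  have h1 : B *ᵥ Pi.single a 1 = fun i => B i a := by
    funext i
    simp [Matrix.mulVec, dotProduct, Pi.single_apply, Finset.sum_ite_eq']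
  have h0 : star (Pi.single a 1 : V → ℝ) ⬝ᵥ (B *ᵥ Pi.single a 1) = 0 := by
    rw [star_id, h1]
    simp [dotProduct, Pi.single_apply, Finset.sum_ite_eq, ha]
  have h2 := (hB.dotProduct_mulVec_zero_iff (Pi.single a 1)).mp h0
  rw [h1] at h2
  have h3 : B b a = 0 := congrFun h2 b
  rw [herm_apply hB.1 a b]
  exact h3

end VCDualAux

end VCDualAux


/-- `χ_v(G)` equals the maximum, over symmetric real matrices `A`
supported on the edges of `G`, with nonnegative entries and `I + A` positive
semidefinite, of the largest eigenvalue of `I + A`. -/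
theorem vecChrom_eq_max_eigenvalue {V : Type*} [Fintype V] [DecidableEq V] [Nonempty V]
    (G : SimpleGraph V) :
    IsGreatest {lam : ℝ | ∃ A : Matrix V V ℝ, A.IsSymm ∧
        (∀ i j, ¬ G.Adj i j → A i j = 0) ∧ (∀ i j, 0 ≤ A i j) ∧
        ((1 : Matrix V V ℝ) + A).PosSemidef ∧ IsMaxEigenvalue (1 + A) lam}
      (vecChrom G) := by
  classical
  constructor
  · obtain ⟨B, hBpsd, hBsupp, hBnn, hBtr, hBsum⟩ := VCDualAux.exists_good_dual G
    set A : Matrix V V ℝ := Matrix.of fun i j =>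
      if i = j then 0 else B i j / (Real.sqrt (B i i) * Real.sqrt (B j j)) with hAdef
    have hBd : ∀ i, 0 ≤ B i i := fun i => hBnn i i
    have hrow : ∀ a b, B a a = 0 → B a b = 0 := fun a b h => VCDualAux.psd_row_zero hBpsd h b
    have hAs : ∀ i j, A i j = A j i := by
      intro i j
      rcases eq_or_ne i j with h | h
      · subst h; rfl
      · simp only [hAdef, Matrix.of_apply, if_neg h, if_neg (Ne.symm h)]
        rw [VCDualAux.herm_apply hBpsd.1 i j, mul_comm]
    have hAsymm : A.IsSymm := by
      ext i j
      rw [Matrix.transpose_apply]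
      exact hAs j i
    have hAsupp : ∀ i j, ¬ G.Adj i j → A i j = 0 := by
      intro i j h
      rcases eq_or_ne i j with hij | hij
      · subst hij; simp [hAdef]
      · simp only [hAdef, Matrix.of_apply, if_neg hij]
        rw [hBsupp i j hij h]
        simp
    have hAnn : ∀ i j, 0 ≤ A i j := by
      intro i j
      rcases eq_or_ne i j with hij | hij
      · subst hij; simp [hAdef]
      · simp only [hAdef, Matrix.of_apply, if_neg hij]
        exact div_nonneg (hBnn i j) (mul_nonneg (Real.sqrt_nonneg _) (Real.sqrt_nonneg _))
    have hAherm : ((1 : Matrix V V ℝ) + A).IsHermitian :=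
      VCDualAux.isHermitian_of_symm fun i j => by
        rw [Matrix.add_apply, Matrix.add_apply, hAs i j,
          VCDualAux.herm_apply (Matrix.isHermitian_one) i j]
    have hSpsd : ((1 : Matrix V V ℝ) + A).PosSemidef := by
      refine VCDualAux.psd_of_form hAherm fun x => ?_
      set y : V → ℝ := fun i => if B i i = 0 then 0 else x i / Real.sqrt (B i i) with hy
      have e : ∀ i j, ((1 : Matrix V V ℝ) + A) i j * (x i * x j)
          = (if i = j ∧ B i i = 0 then x i * x i else 0) + B i j * (y i * y j) := by
        intro i j
        rcases eq_or_ne i j with hij | hij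
        · subst hij
          rw [Matrix.add_apply, Matrix.one_apply_eq]
          have hA0 : A i i = 0 := by simp [hAdef]
          rw [hA0, add_zero, one_mul]
          by_cases h0 : B i i = 0
          · rw [if_pos ⟨rfl, h0⟩]
            simp [hy, h0]
          · rw [if_neg (fun hc => h0 hc.2)]
            simp only [hy, if_neg h0]
            have hs : Real.sqrt (B i i) * Real.sqrt (B i i) = B i i :=
              Real.mul_self_sqrt (hBd i)
            have hsi : Real.sqrt (B i i) ≠ 0 :=
              Real.sqrt_ne_zero'.mpr (lt_of_le_of_ne (hBd i) (Ne.symm h0))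
            rw [zero_add]
            field_simp
            linear_combination (x i * x i) * hs
        · rw [Matrix.add_apply, Matrix.one_apply_ne hij, zero_add]
          rw [if_neg (fun hc => hij hc.1)]
          simp only [hAdef, Matrix.of_apply, if_neg hij]
          by_cases h0 : B i i = 0
          · rw [hrow i j h0]
            simp [hy, h0]
          · by_cases h1 : B j j = 0
            · have hBij : B i j = 0 := by
                rw [VCDualAux.herm_apply hBpsd.1 i j]
                exact hrow j i h1
              simp [hBij, hy, h1]
            · simp only [hy, if_neg h0, if_neg h1]
              have hsi : Real.sqrt (B i i) ≠ 0 :=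
                Real.sqrt_ne_zero'.mpr (lt_of_le_of_ne (hBd i) (Ne.symm h0))
              have hsj : Real.sqrt (B j j) ≠ 0 :=
                Real.sqrt_ne_zero'.mpr (lt_of_le_of_ne (hBd j) (Ne.symm h1))
              field_simp
              ring
      have hsplit : ∑ i, ∑ j, ((1 : Matrix V V ℝ) + A) i j * (x i * x j)
          = (∑ i, ∑ j, (if i = j ∧ B i i = 0 then x i * x i else 0))
            + ∑ i, ∑ j, B i j * (y i * y j) := by
        calc ∑ i, ∑ j, ((1 : Matrix V V ℝ) + A) i j * (x i * x j)
            = ∑ i, ∑ j, ((if i = j ∧ B i i = 0 then x i * x i else 0) + B i j * (y i * y j)) :=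
              Finset.sum_congr rfl fun i _ => Finset.sum_congr rfl fun j _ => e i j
          _ = _ := by simp [Finset.sum_add_distrib]
      rw [hsplit]
      have hp1 : 0 ≤ ∑ i, ∑ j, (if i = j ∧ B i i = 0 then x i * x i else 0) :=
        Finset.sum_nonneg fun i _ => Finset.sum_nonneg fun j _ => by
          by_cases h : i = j ∧ B i i = 0
          · rw [if_pos h]; exact mul_self_nonneg _
          · rw [if_neg h]
      have hp2 := VCDualAux.psd_form hBpsd y
      linarith
    set u : V → ℝ := fun i => Real.sqrt (B i i) with hu
    have hu1 : u ⬝ᵥ u = 1 := by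
      rw [dotProduct]
      rw [Finset.sum_congr rfl fun i _ => Real.mul_self_sqrt (hBd i)]
      exact hBtr
    have huform : ∑ i, ∑ j, ((1 : Matrix V V ℝ) + A) i j * (u i * u j) = ∑ i, ∑ j, B i j := by
      refine Finset.sum_congr rfl fun i _ => Finset.sum_congr rfl fun j _ => ?_
      rcases eq_or_ne i j with hij | hij
      · subst hij
        rw [Matrix.add_apply, Matrix.one_apply_eq]
        have hA0 : A i i = 0 := by simp [hAdef]
        rw [hA0, add_zero, one_mul]
        exact Real.mul_self_sqrt (hBd i)
      · rw [Matrix.add_apply, Matrix.one_apply_ne hij, zero_add]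
        simp only [hAdef, Matrix.of_apply, if_neg hij, hu]
        by_cases h0 : B i i = 0
        · rw [hrow i j h0]
          simp [h0]
        · by_cases h1 : B j j = 0
          · have hBij : B i j = 0 := by
              rw [VCDualAux.herm_apply hBpsd.1 i j]
              exact hrow j i h1
            simp [hBij, h1]
          · have hsi : Real.sqrt (B i i) ≠ 0 :=
              Real.sqrt_ne_zero'.mpr (lt_of_le_of_ne (hBd i) (Ne.symm h0))
            have hsj : Real.sqrt (B j j) ≠ 0 :=
              Real.sqrt_ne_zero'.mpr (lt_of_le_of_ne (hBd j) (Ne.symm h1))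
            field_simp
    obtain ⟨lam, v, hmax, hv1, hveig, hray⟩ :=
      VCDualAux.exists_maxEig ((1 : Matrix V V ℝ) + A) hSpsd.1
    have hge : vecChrom G ≤ lam := by
      have h2 : u ⬝ᵥ (((1 : Matrix V V ℝ) + A) *ᵥ u) = ∑ i, ∑ j, B i j := by
        rw [VCDualAux.quadForm]; exact huform
      have h3 := hray u
      rw [h2, hu1, mul_one] at h3
      linarith [hBsum]
    have hle : lam ≤ vecChrom G := by
      rw [VCDualAux.vecChrom_def]
      exact le_csInf ⟨_, VCDualAux.TSet_nonempty G⟩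
        fun t ht => VCDualAux.weak_duality G hAsupp hAnn hSpsd hmax ht
    have hlameq : lam = vecChrom G := le_antisymm hle hge
    exact ⟨A, hAsymm, hAsupp, hAnn, hSpsd, hlameq ▸ hmax⟩
  · rintro lam ⟨A, hAsymm, hAsupp, hAnn, hpsd, hmax⟩
    rw [VCDualAux.vecChrom_def]
    exact le_csInf ⟨_, VCDualAux.TSet_nonempty G⟩
      fun t ht => VCDualAux.weak_duality G hAsupp hAnn hpsd hmax ht
end

section
/- Let G and H be finite simple graphs with χ_v(G) < χ_v(H). Then rk(G × H) ≥ rk(G), and equality rk(G × H) = rk(G) holds if and only if every optimal vector coloring of G × H is induced by G. -/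
open Matrix Kronecker

noncomputable section Aux

open Finset

namespace VCAux

variable {V α β : Type*}

/-- The matrix whose columns are the vectors `p i`. -/
lemma psdEx {M : Matrix V V ℝ} [Fintype V] (hM : M.PosSemidef) :
    ∃ B : Matrix V V ℝ, M = Bᴴ * B := by
  classical
  open scoped MatrixOrder in
  obtain ⟨B, hB⟩ := CStarAlgebra.nonneg_iff_eq_star_mul_self.mp hM.nonneg
  exact ⟨B, hB⟩

def matOf {d : ℕ} (p : V → Fin d → ℝ) : Matrix (Fin d) V ℝ := Matrix.of fun r i => p i r

lemma gram_eq_mul {d : ℕ} (p : V → Fin d → ℝ) :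
    gramMat p = (matOf p)ᴴ * matOf p := by
  ext i j
  simp [gramMat, matOf, Matrix.mul_apply, Matrix.conjTranspose_apply, dotProduct]

lemma gram_psd [Fintype V] {d : ℕ} (p : V → Fin d → ℝ) : (gramMat p).PosSemidef := by
  rw [gram_eq_mul]
  exact Matrix.posSemidef_conjTranspose_mul_self _

lemma gram_apply {d : ℕ} (p : V → Fin d → ℝ) (i j : V) :
    gramMat p i j = p i ⬝ᵥ p j := rfl

lemma gram_symm {d : ℕ} (p : V → Fin d → ℝ) (i j : V) :
    gramMat p i j = gramMat p j i := by
  simp only [gramMat, Matrix.of_apply]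
  exact dotProduct_comm _ _

lemma psd_to_gram [Fintype V] {M : Matrix V V ℝ} (hM : M.PosSemidef) :
    ∃ p : V → Fin (Fintype.card V) → ℝ, M = gramMat p := by
  classical
  obtain ⟨B, hB⟩ := psdEx hM
  refine ⟨fun i r => B ((Fintype.equivFin V).symm r) i, ?_⟩
  ext i j
  rw [hB]
  simp only [gramMat, Matrix.mul_apply, Matrix.conjTranspose_apply, Matrix.of_apply, dotProduct,
    star_trivial]
  exact (Equiv.sum_comp (Fintype.equivFin V).symm fun v => B v i * B v j).symm

lemma rank_gram [Fintype V] {d : ℕ} (p : V → Fin d → ℝ) :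
    (gramMat p).rank = Set.finrank ℝ (Set.range p) := by
  have h1 : (matOf p)ᴴ = (matOf p)ᵀ := by
    ext i j; simp [Matrix.conjTranspose_apply]
  rw [gram_eq_mul, h1, Matrix.rank_transpose_mul_self, Matrix.rank_eq_finrank_span_cols]
  have : (matOf p).col = fun i => p i := rfl
  rw [this, Set.finrank]

lemma rank_gram_comp_fst [Fintype α] [Fintype β] [Nonempty β] {d : ℕ} (p : α → Fin d → ℝ) :
    (gramMat (fun x : α × β => p x.1)).rank = (gramMat p).rank := by
  rw [rank_gram, rank_gram]
  congr 1
  have : (fun x : α × β => p x.1) = p ∘ Prod.fst := rfl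
  rw [this, Function.Surjective.range_comp Prod.fst_surjective]

lemma gram_comp_fst_eq_kron [Fintype α] [Fintype β] {d : ℕ} (p : α → Fin d → ℝ) :
    gramMat (fun x : α × β => p x.1) = Matrix.kroneckerMap (· * ·) (gramMat p) (allOnes β) := by
  ext ⟨i, l⟩ ⟨j, k⟩
  simp [gramMat, allOnes, Matrix.kroneckerMap_apply]

lemma psd_smul [Fintype V] {M : Matrix V V ℝ} (hM : M.PosSemidef) {c : ℝ} (hc : 0 ≤ c) :
    (c • M).PosSemidef := by
  refine Matrix.PosSemidef.of_dotProduct_mulVec_nonneg ?_ ?_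
  · have h1 : (c • M)ᴴ = c • Mᴴ := by
      ext i j; simp [Matrix.conjTranspose_apply]
    rw [Matrix.IsHermitian, h1, hM.1]
  · intro x
    have := hM.dotProduct_mulVec_nonneg x
    rw [Matrix.smul_mulVec, dotProduct_smul]
    exact mul_nonneg hc this

lemma psd_diag_nonneg [Fintype V] [DecidableEq V] {M : Matrix V V ℝ} (hM : M.PosSemidef) (i : V) :
    0 ≤ M i i := by
  have := hM.dotProduct_mulVec_nonneg (Pi.single i 1)
  simpa [dotProduct, Matrix.mulVec, Pi.single_apply] using this

lemma psd_add_kernel [Fintype V] {A B : Matrix V V ℝ} (hA : A.PosSemidef) (hB : B.PosSemidef)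
    {x : V → ℝ} (hx : (A + B) *ᵥ x = 0) : A *ᵥ x = 0 := by
  have h1 : x ⬝ᵥ A *ᵥ x + x ⬝ᵥ B *ᵥ x = 0 := by
    rw [← dotProduct_add, ← Matrix.add_mulVec, hx, dotProduct_zero]
  have ha := hA.dotProduct_mulVec_nonneg x
  have hb := hB.dotProduct_mulVec_nonneg x
  rw [star_trivial] at ha hb
  have h2 : x ⬝ᵥ A *ᵥ x = 0 := by linarith
  have := (hA.dotProduct_mulVec_zero_iff x).mp (by rwa [star_trivial])
  exact this

lemma rank_le_of_ker_le [Fintype V] {A B : Matrix V V ℝ}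
    (h : LinearMap.ker A.mulVecLin ≤ LinearMap.ker B.mulVecLin) : B.rank ≤ A.rank := by
  have h1 := LinearMap.finrank_range_add_finrank_ker A.mulVecLin
  have h2 := LinearMap.finrank_range_add_finrank_ker B.mulVecLin
  have h3 : Module.finrank ℝ (LinearMap.ker A.mulVecLin) ≤
      Module.finrank ℝ (LinearMap.ker B.mulVecLin) := Submodule.finrank_mono h
  have hA : A.rank = Module.finrank ℝ (LinearMap.range A.mulVecLin) := rfl
  have hB : B.rank = Module.finrank ℝ (LinearMap.range B.mulVecLin) := rfl
  omega

end VCAux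

end Aux

namespace VCAux

variable {V : Type*}

/-- The feasibility set defining `vecChrom`. -/
def Sset [Fintype V] (G : SimpleGraph V) : Set ℝ :=
  {t : ℝ | 1 ≤ t ∧ ∃ (d : ℕ) (p : V → Fin d → ℝ), IsVecColoring G t p}

lemma vecChrom_eq_sInf [Fintype V] (G : SimpleGraph V) : vecChrom G = sInf (Sset G) := rfl

lemma simplex_psd [Fintype V] [DecidableEq V] :
    (Matrix.of fun i j : V => if i = j then (Fintype.card V : ℝ) else -1).PosSemidef := by
  classical
  refine Matrix.PosSemidef.of_dotProduct_mulVec_nonneg ?_ ?_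
  · ext i j
    by_cases h : i = j <;> simp [Matrix.conjTranspose_apply, h, eq_comm]
  · intro x
    rw [star_trivial]
    set n : ℝ := (Fintype.card V : ℝ) with hn
    have hmv : ∀ i, ((Matrix.of fun i j : V => if i = j then n else -1) *ᵥ x) i
        = (n + 1) * x i - ∑ j, x j := by
      intro i
      have h1 : ∀ j, (if i = j then n else -1) * x j
          = (n + 1) * (if i = j then x j else 0) - x j := by
        intro j; split <;> ring
      simp only [Matrix.mulVec, dotProduct, Matrix.of_apply]
      rw [Finset.sum_congr rfl fun j _ => h1 j, Finset.sum_sub_distrib, ← Finset.mul_sum,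
        Finset.sum_ite_eq]
      simp
    have hq : x ⬝ᵥ ((Matrix.of fun i j : V => if i = j then n else -1) *ᵥ x)
        = (n + 1) * (∑ i, x i ^ 2) - (∑ i, x i) ^ 2 := by
      simp only [dotProduct]
      rw [Finset.sum_congr rfl fun i _ => by rw [hmv i]]
      rw [Finset.sum_congr rfl (fun i _ => by ring :
        ∀ i ∈ Finset.univ, x i * ((n + 1) * x i - ∑ j, x j)
          = (n + 1) * x i ^ 2 - (∑ j, x j) * x i)]
      rw [Finset.sum_sub_distrib, ← Finset.mul_sum, ← Finset.mul_sum]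
      ring
    rw [hq]
    have hcs := Finset.sum_mul_sq_le_sq_mul_sq Finset.univ x (fun _ => 1)
    simp only [mul_one, one_pow] at hcs
    have hxx : 0 ≤ ∑ i, x i ^ 2 := Finset.sum_nonneg fun i _ => sq_nonneg _
    have hcard : (∑ _i : V, (1:ℝ)) = n := by simp [hn]
    nlinarith [hcs]

lemma lift_coloring [Fintype V] {G : SimpleGraph V} {M : Matrix V V ℝ} {r : ℝ}
    (hM : M.PosSemidef) (hd : ∀ i, M i i ≤ r) (he : ∀ i j, G.Adj i j → M i j ≤ -1) :
    ∃ p : V → Fin (Fintype.card V) → ℝ, IsVecColoring G (1 + r) p := by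
  classical
  have hdiag : (Matrix.diagonal (fun i => r - M i i)).PosSemidef :=
    Matrix.PosSemidef.diagonal (fun i => sub_nonneg.mpr (hd i))
  obtain ⟨p, hp⟩ := psd_to_gram (hM.add hdiag)
  refine ⟨p, fun i => ?_, fun i j hij => ?_⟩
  · have h1 := congrFun (congrFun hp i) i
    simp only [Matrix.add_apply, Matrix.diagonal_apply_eq, gram_apply] at h1
    rw [← h1]; ring
  · have h1 := congrFun (congrFun hp i) j
    simp only [Matrix.add_apply, Matrix.diagonal_apply_ne _ hij.ne, gram_apply] at h1
    rw [← h1, add_zero]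
    exact he i j hij

lemma card_succ_mem_Sset [Fintype V] (G : SimpleGraph V) :
    ((Fintype.card V : ℝ) + 1) ∈ Sset G := by
  classical
  obtain ⟨p, hp⟩ := lift_coloring (G := G) (r := (Fintype.card V : ℝ)) simplex_psd
    (fun i => by simp) (fun i j hij => by simp [hij.ne])
  have hc : (0:ℝ) ≤ (Fintype.card V : ℝ) := Nat.cast_nonneg _
  refine ⟨by linarith, Fintype.card V, p, ?_⟩
  rwa [add_comm]

lemma Sset_nonempty [Fintype V] (G : SimpleGraph V) : (Sset G).Nonempty :=
  ⟨_, card_succ_mem_Sset G⟩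

lemma Sset_bddBelow [Fintype V] (G : SimpleGraph V) : BddBelow (Sset G) :=
  ⟨1, fun _ ht => ht.1⟩

lemma one_le_vecChrom [Fintype V] (G : SimpleGraph V) : 1 ≤ vecChrom G :=
  le_csInf (Sset_nonempty G) fun _ ht => ht.1

lemma vecChrom_le [Fintype V] {G : SimpleGraph V} {t : ℝ} (ht : t ∈ Sset G) : vecChrom G ≤ t :=
  csInf_le (Sset_bddBelow G) ht

lemma vecChrom_edgeless [Fintype V] {G : SimpleGraph V} (h : ∀ i j, ¬ G.Adj i j) :
    vecChrom G = 1 := by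
  refine le_antisymm ?_ (one_le_vecChrom G)
  obtain ⟨p, hp⟩ := lift_coloring (G := G) (M := 0) (r := 0)
    Matrix.PosSemidef.zero (fun i => le_rfl) (fun i j hij => absurd hij (h i j))
  have h10 : (1 : ℝ) + 0 = 1 := by norm_num
  rw [h10] at hp
  exact vecChrom_le ⟨le_rfl, _, p, hp⟩

lemma exists_edge_of_one_lt [Fintype V] {G : SimpleGraph V} (h : 1 < vecChrom G) :
    ∃ i j, G.Adj i j := by
  by_contra hno
  push_neg at hno
  rw [vecChrom_edgeless hno] at h
  exact lt_irrefl _ h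

lemma psd_entry_bound [Fintype V] {M : Matrix V V ℝ} (hM : M.PosSemidef) {c : ℝ}
    (hd : ∀ i, M i i ≤ c) (i j : V) : |M i j| ≤ c := by
  classical
  rcases eq_or_ne i j with rfl | hij
  · rw [abs_of_nonneg (psd_diag_nonneg hM i)]; exact hd i
  · have key : ∀ a b : ℝ, 0 ≤ a * (a * M i i + b * M i j) + b * (a * M j i + b * M j j) := by
      intro a b
      have h := hM.dotProduct_mulVec_nonneg (a • (Pi.single i 1 : V → ℝ) + b • (Pi.single j 1 : V → ℝ))
      rw [star_trivial] at h
      have hw : M *ᵥ (a • (Pi.single i 1 : V → ℝ) + b • (Pi.single j 1 : V → ℝ))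
          = fun l => a * M l i + b * M l j := by
        ext l
        simp [Matrix.mulVec_add, Matrix.mulVec_smul, Matrix.mulVec_single]
      rw [hw] at h
      simpa [add_dotProduct, smul_dotProduct, single_dotProduct,
        smul_eq_mul] using h
    have hsym : M j i = M i j := by
      have h1 := congrFun (congrFun hM.1 i) j
      simpa [Matrix.conjTranspose_apply] using h1
    have h1 := key 1 1
    have h2 := key 1 (-1)
    rw [hsym] at h1 h2
    have hdi := psd_diag_nonneg hM i
    have hdj := psd_diag_nonneg hM j
    rw [abs_le]
    constructor <;> nlinarith [hd i, hd j]

lemma exists_opt_coloring [Fintype V] (G : SimpleGraph V) :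
    ∃ p : V → Fin (Fintype.card V) → ℝ, IsVecColoring G (vecChrom G) p := by
  classical
  cases isEmpty_or_nonempty V with
  | inl hV => exact ⟨fun _ => 0, fun i => isEmptyElim i, fun i _ _ => isEmptyElim i⟩
  | inr hV =>
    set n : ℝ := (Fintype.card V : ℝ) with hn
    have hn0 : (0:ℝ) ≤ n := Nat.cast_nonneg _
    set C : Set (ℝ × Matrix V V ℝ) :=
      {q | q.2.PosSemidef ∧ (∀ i j, G.Adj i j → q.2 i j ≤ -1) ∧ (∀ i, q.2 i i ≤ q.1 - 1)
        ∧ 1 ≤ q.1 ∧ q.1 ≤ n + 1} with hC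
    have hsimmem : (n + 1, Matrix.of fun i j : V => if i = j then n else -1) ∈ C := by
      refine ⟨simplex_psd, fun i j hij => ?_, fun i => ?_, ?_, le_rfl⟩
      · show (if i = j then n else -1) ≤ -1
        rw [if_neg hij.ne]
      · show (if i = i then n else -1) ≤ (n + 1) - 1
        rw [if_pos rfl]; linarith
      · show (1:ℝ) ≤ n + 1
        linarith
    have hCne : C.Nonempty := ⟨_, hsimmem⟩
    have hentry : ∀ (i j : V), Continuous fun M : Matrix V V ℝ => M i j := by
      intro i j
      exact continuous_id.matrix_elem i j
    have hPSDclosed : IsClosed {M : Matrix V V ℝ | M.PosSemidef} := by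
      have hset : {M : Matrix V V ℝ | M.PosSemidef} =
          (⋂ (i : V) (j : V), {M : Matrix V V ℝ | M j i = M i j}) ∩
            ⋂ (x : V → ℝ), {M : Matrix V V ℝ | 0 ≤ x ⬝ᵥ M *ᵥ x} := by
        ext M
        simp only [Set.mem_inter_iff, Set.mem_iInter, Set.mem_setOf_eq]
        constructor
        · intro hM
          refine ⟨fun i j => ?_, fun x => by simpa using hM.dotProduct_mulVec_nonneg x⟩
          have h1 := congrFun (congrFun hM.1 i) j
          simpa [Matrix.conjTranspose_apply] using h1
        · rintro ⟨h1, h2⟩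
          refine Matrix.PosSemidef.of_dotProduct_mulVec_nonneg ?_ fun x => by simpa using h2 x
          ext i j
          simpa [Matrix.conjTranspose_apply] using h1 i j
      rw [hset]
      refine IsClosed.inter
        (isClosed_iInter fun i => isClosed_iInter fun j =>
          isClosed_eq (hentry j i) (hentry i j)) (isClosed_iInter fun x => ?_)
      refine isClosed_le continuous_const ?_
      simp only [dotProduct, Matrix.mulVec]
      apply continuous_finset_sum
      intro i _
      apply Continuous.mul continuous_const
      apply continuous_finset_sum
      intro j _
      exact (hentry i j).mul continuous_const
    have hCclosed : IsClosed C := by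
      have hCeq : C = (Prod.snd ⁻¹' {M : Matrix V V ℝ | M.PosSemidef}) ∩
          ((⋂ (i : V) (j : V), {q : ℝ × Matrix V V ℝ | G.Adj i j → q.2 i j ≤ -1}) ∩
           ((⋂ i : V, {q : ℝ × Matrix V V ℝ | q.2 i i ≤ q.1 - 1}) ∩
            ({q : ℝ × Matrix V V ℝ | 1 ≤ q.1} ∩ {q : ℝ × Matrix V V ℝ | q.1 ≤ n + 1}))) := by
        ext q
        simp only [hC, Set.mem_setOf_eq, Set.mem_inter_iff, Set.mem_preimage, Set.mem_iInter]
        try tauto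
      rw [hCeq]
      refine (hPSDclosed.preimage continuous_snd).inter (IsClosed.inter ?_ (IsClosed.inter ?_
        (IsClosed.inter ?_ ?_)))
      · refine isClosed_iInter fun i => isClosed_iInter fun j => ?_
        by_cases hadj : G.Adj i j
        · have h1 : {q : ℝ × Matrix V V ℝ | G.Adj i j → q.2 i j ≤ -1}
              = {q : ℝ × Matrix V V ℝ | q.2 i j ≤ -1} := by
            ext q; simp [hadj]
          rw [h1]
          exact isClosed_le ((hentry i j).comp continuous_snd) continuous_const
        · have h1 : {q : ℝ × Matrix V V ℝ | G.Adj i j → q.2 i j ≤ -1} = Set.univ := by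
            ext q; simp [hadj]
          rw [h1]; exact isClosed_univ
      · exact isClosed_iInter fun i =>
          isClosed_le ((hentry i i).comp continuous_snd) (continuous_fst.sub continuous_const)
      · exact isClosed_le continuous_const continuous_fst
      · exact isClosed_le continuous_fst continuous_const
    have hbox : IsCompact {M : Matrix V V ℝ | ∀ i j, M i j ∈ Set.Icc (-(n+1)) (n+1)} := by
      have h1 : {M : Matrix V V ℝ | ∀ i j, M i j ∈ Set.Icc (-(n+1)) (n+1)}
          = Set.univ.pi fun _i : V => Set.univ.pi fun _j : V => Set.Icc (-(n+1)) (n+1) := by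
        ext M
        constructor
        · intro h i _ j _
          exact h i j
        · intro h i j
          exact h i (Set.mem_univ i) j (Set.mem_univ j)
      rw [h1]
      exact isCompact_univ_pi fun i => isCompact_univ_pi fun j => isCompact_Icc
    have hCsub : C ⊆ (Set.Icc 1 (n+1)) ×ˢ {M : Matrix V V ℝ | ∀ i j, M i j ∈ Set.Icc (-(n+1)) (n+1)} := by
      rintro ⟨t, M⟩ ⟨hpsd, _hedge, hdiag, ht1, ht2⟩
      refine ⟨⟨ht1, ht2⟩, fun i j => ?_⟩
      have hb := psd_entry_bound hpsd (c := n + 1) (fun i => by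
        have := hdiag i; simp only at this ⊢; linarith) i j
      rw [abs_le] at hb
      exact ⟨hb.1, hb.2⟩
    have hCcompact : IsCompact C :=
      (isCompact_Icc.prod hbox).of_isClosed_subset hCclosed hCsub
    obtain ⟨q₀, hmem, hmin⟩ := hCcompact.exists_isMinOn hCne continuous_fst.continuousOn
    obtain ⟨t₀, M₀⟩ := q₀
    rw [isMinOn_iff] at hmin
    obtain ⟨hpsd₀, hedge₀, hdiag₀, ht₀1, ht₀2⟩ := hmem
    simp only at hpsd₀ hedge₀ hdiag₀ ht₀1 ht₀2
    have h1 : vecChrom G ≤ t₀ := by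
      obtain ⟨p, hp⟩ := lift_coloring hpsd₀ hdiag₀ hedge₀
      have hmem' : (1 + (t₀ - 1)) ∈ Sset G := ⟨by linarith, _, p, hp⟩
      have := vecChrom_le hmem'
      linarith
    have h2 : t₀ ≤ vecChrom G := by
      refine le_csInf (Sset_nonempty G) fun t ht => ?_
      obtain ⟨ht1, d, p, hp⟩ := ht
      rcases le_or_gt t (n + 1) with hle | hlt
      · refine hmin (t, gramMat p) ⟨gram_psd p, fun i j hij => hp.2 i j hij, fun i => ?_, ht1, hle⟩
        show gramMat p i i ≤ t - 1
        rw [gram_apply, hp.1 i]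
      · exact le_trans (hmin _ hsimmem) (le_of_lt hlt)
    have heq : vecChrom G = 1 + (t₀ - 1) := by linarith
    obtain ⟨p, hp⟩ := lift_coloring hpsd₀ hdiag₀ hedge₀
    rw [heq]
    exact ⟨p, hp⟩

end VCAux

namespace VCAux

variable {V α β : Type*}

lemma pairing_nonneg [Fintype V] {A : Matrix V V ℝ} (hA : A.PosSemidef) {d : ℕ}
    (w : V → Fin d → ℝ) : 0 ≤ ∑ i, ∑ j, A i j * (w i ⬝ᵥ w j) := by
  have hterm : ∀ i j, A i j * (w i ⬝ᵥ w j) = ∑ r, w i r * (A i j * w j r) := by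
    intro i j
    rw [dotProduct, Finset.mul_sum]
    exact Finset.sum_congr rfl fun r _ => by ring
  have hcalc : ∑ i, ∑ j, A i j * (w i ⬝ᵥ w j)
      = ∑ r : Fin d, (fun i => w i r) ⬝ᵥ A *ᵥ (fun i => w i r) := by
    calc ∑ i, ∑ j, A i j * (w i ⬝ᵥ w j)
        = ∑ i, ∑ j, ∑ r, w i r * (A i j * w j r) :=
          Finset.sum_congr rfl fun i _ => Finset.sum_congr rfl fun j _ => hterm i j
      _ = ∑ i, ∑ r : Fin d, ∑ j, w i r * (A i j * w j r) :=
          Finset.sum_congr rfl fun i _ => Finset.sum_comm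
      _ = ∑ r : Fin d, ∑ i, ∑ j, w i r * (A i j * w j r) := Finset.sum_comm
      _ = ∑ r : Fin d, (fun i => w i r) ⬝ᵥ A *ᵥ (fun i => w i r) := by
          refine Finset.sum_congr rfl fun r _ => ?_
          simp only [dotProduct, Matrix.mulVec, Finset.mul_sum]
  rw [hcalc]
  refine Finset.sum_nonneg fun r _ => ?_
  have := hA.dotProduct_mulVec_nonneg (fun i => w i r)
  rwa [star_trivial] at this

lemma sum_split [Fintype V] [DecidableEq V] (F : V → V → ℝ) :
    ∑ i, ∑ j, F i j
      = (∑ i, F i i) + ∑ q ∈ Finset.univ.filter (fun q : V × V => q.1 ≠ q.2), F q.1 q.2 := by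
  have h1 : ∑ i, ∑ j, F i j = ∑ q : V × V, F q.1 q.2 := by
    rw [Fintype.sum_prod_type]
  have hdiag : ∑ q ∈ Finset.univ.filter (fun q : V × V => ¬ q.1 ≠ q.2), F q.1 q.2
      = ∑ i, F i i := by
    rw [Finset.sum_filter, Fintype.sum_prod_type]
    simp only [not_ne_iff]
    refine Finset.sum_congr rfl fun a _ => ?_
    rw [Finset.sum_ite_eq]
    simp
  rw [h1, ← Finset.sum_filter_add_sum_filter_not Finset.univ (fun q : V × V => q.1 ≠ q.2),
    hdiag, add_comm]

lemma trace_eq_sum [Fintype V] (B : Matrix V V ℝ) : B.trace = ∑ i, B i i := rfl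

lemma weak_duality [Fintype V] {G : SimpleGraph V} {B : Matrix V V ℝ} (hB : IsDualSol G B)
    {t : ℝ} (ht : t ∈ Sset G) : (∑ i, ∑ j, B i j) ≤ t := by
  classical
  obtain ⟨ht1, d, p, hp⟩ := ht
  obtain ⟨hpsd, hsupp, hnn, htr⟩ := hB
  have htrace : ∑ i, B i i = 1 := by rw [← trace_eq_sum]; exact htr
  have h0 : 0 ≤ ∑ i, ∑ j, B i j * (p i ⬝ᵥ p j) := pairing_nonneg hpsd p
  have hsplit1 := sum_split (fun i j => B i j * (p i ⬝ᵥ p j))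
  have hsplit2 := sum_split (fun i j => B i j)
  set S := Finset.univ.filter (fun q : V × V => q.1 ≠ q.2) with hS
  have hterm : ∀ q ∈ S, B q.1 q.2 * (p q.1 ⬝ᵥ p q.2) ≤ -B q.1 q.2 := by
    intro q hq
    have hne : q.1 ≠ q.2 := (Finset.mem_filter.mp hq).2
    by_cases hadj : G.Adj q.1 q.2
    · have h1 := hp.2 _ _ hadj
      nlinarith [hnn q.1 q.2]
    · rw [hsupp _ _ hne hadj]
      simp
  have hsum : ∑ q ∈ S, B q.1 q.2 * (p q.1 ⬝ᵥ p q.2) ≤ ∑ q ∈ S, -B q.1 q.2 :=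
    Finset.sum_le_sum hterm
  have hneg : ∑ q ∈ S, -B q.1 q.2 = -∑ q ∈ S, B q.1 q.2 := by
    rw [Finset.sum_neg_distrib]
  have hdiag : ∑ i, B i i * (p i ⬝ᵥ p i) = (t - 1) * ∑ i, B i i := by
    rw [Finset.mul_sum]
    exact Finset.sum_congr rfl fun i _ => by rw [hp.1 i]; ring
  rw [hsplit1, hdiag, htrace] at h0
  rw [hsplit2, htrace]
  linarith

lemma opt_dual_slack [Fintype V] {G : SimpleGraph V} {B : Matrix V V ℝ} (hB : IsOptDual G B)
    {d : ℕ} {p : V → Fin d → ℝ} (hp : IsVecColoring G (vecChrom G) p)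
    {i j : V} (hij : i ≠ j) : B i j * (p i ⬝ᵥ p j) = -B i j := by
  classical
  obtain ⟨⟨hpsd, hsupp, hnn, htr⟩, hval⟩ := hB
  have htrace : ∑ i, B i i = 1 := by rw [← trace_eq_sum]; exact htr
  have h0 : 0 ≤ ∑ i, ∑ j, B i j * (p i ⬝ᵥ p j) := pairing_nonneg hpsd p
  have hsplit1 := sum_split (fun i j => B i j * (p i ⬝ᵥ p j))
  have hsplit2 := sum_split (fun i j => B i j)
  set S := Finset.univ.filter (fun q : V × V => q.1 ≠ q.2) with hS
  have hterm : ∀ q ∈ S, B q.1 q.2 * (p q.1 ⬝ᵥ p q.2) ≤ -B q.1 q.2 := by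
    intro q hq
    have hne : q.1 ≠ q.2 := (Finset.mem_filter.mp hq).2
    by_cases hadj : G.Adj q.1 q.2
    · have h1 := hp.2 _ _ hadj
      nlinarith [hnn q.1 q.2]
    · rw [hsupp _ _ hne hadj]
      simp
  have hdiag : ∑ i, B i i * (p i ⬝ᵥ p i) = (vecChrom G - 1) * ∑ i, B i i := by
    rw [Finset.mul_sum]
    exact Finset.sum_congr rfl fun i _ => by rw [hp.1 i]; ring
  have hoffB : ∑ q ∈ S, B q.1 q.2 = vecChrom G - 1 := by
    rw [hsplit2, htrace] at hval
    linarith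
  have hge : ∑ q ∈ S, -B q.1 q.2 ≤ ∑ q ∈ S, B q.1 q.2 * (p q.1 ⬝ᵥ p q.2) := by
    rw [Finset.sum_neg_distrib, hoffB]
    rw [hsplit1, hdiag, htrace] at h0
    linarith
  have hsum_eq : ∑ q ∈ S, B q.1 q.2 * (p q.1 ⬝ᵥ p q.2) = ∑ q ∈ S, -B q.1 q.2 :=
    le_antisymm (Finset.sum_le_sum hterm) hge
  have hall := (Finset.sum_eq_sum_iff_of_le hterm).mp hsum_eq
  have hmem : ((i, j) : V × V) ∈ S := by
    simp [hS, hij]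
  exact hall (i, j) hmem

lemma schur_psd [Fintype V] {A B : Matrix V V ℝ} (hA : A.PosSemidef) (hB : B.PosSemidef) :
    (Matrix.of fun i j => A i j * B i j).PosSemidef := by
  classical
  obtain ⟨q, hq⟩ := psd_to_gram hB
  refine Matrix.PosSemidef.of_dotProduct_mulVec_nonneg ?_ ?_
  · ext i j
    have hA' : A j i = A i j := by
      have := congrFun (congrFun hA.1 i) j
      simpa [Matrix.conjTranspose_apply] using this
    have hB' : B j i = B i j := by
      have := congrFun (congrFun hB.1 i) j
      simpa [Matrix.conjTranspose_apply] using this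
    simp only [Matrix.conjTranspose_apply, star_trivial, Matrix.of_apply, hA', hB']
  · intro x
    rw [star_trivial]
    have hquad : x ⬝ᵥ (Matrix.of fun i j => A i j * B i j) *ᵥ x
        = ∑ i, ∑ j, A i j * ((x i • q i) ⬝ᵥ (x j • q j)) := by
      simp only [dotProduct, Matrix.mulVec, Matrix.of_apply, Finset.mul_sum]
      refine Finset.sum_congr rfl fun i _ => Finset.sum_congr rfl fun j _ => ?_
      have hBij : B i j = q i ⬝ᵥ q j := by rw [hq]; rfl
      rw [hBij, dotProduct]
      simp only [Pi.smul_apply, smul_eq_mul, Finset.mul_sum, Finset.sum_mul]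
      exact Finset.sum_congr rfl fun r _ => by ring
    rw [hquad]
    exact pairing_nonneg hA (fun i => x i • q i)

lemma kron_psd [Fintype α] [Fintype β] {A : Matrix α α ℝ} {B : Matrix β β ℝ}
    (hA : A.PosSemidef) (hB : B.PosSemidef) : (A ⊗ₖ B).PosSemidef := by
  obtain ⟨A₁, rfl⟩ := psdEx hA
  obtain ⟨B₁, rfl⟩ := psdEx hB
  rw [Matrix.mul_kronecker_mul]
  have h1 : A₁ᴴ ⊗ₖ B₁ᴴ = (A₁ ⊗ₖ B₁)ᴴ := by
    ext ⟨i, l⟩ ⟨j, k⟩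
    simp [Matrix.conjTranspose_apply, Matrix.kroneckerMap_apply]
  rw [h1]
  exact Matrix.posSemidef_conjTranspose_mul_self _

/-- Diagonal part of a matrix. -/
def dpart [DecidableEq V] (B : Matrix V V ℝ) : Matrix V V ℝ :=
  Matrix.of fun i j => if i = j then B i j else 0

/-- Off-diagonal part of a matrix. -/
def opart [DecidableEq V] (B : Matrix V V ℝ) : Matrix V V ℝ :=
  Matrix.of fun i j => if i = j then 0 else B i j

lemma dpart_add_opart [DecidableEq V] (B : Matrix V V ℝ) : dpart B + opart B = B := by
  ext i j
  by_cases h : i = j <;> simp [dpart, opart, h]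

lemma dpart_psd [Fintype V] [DecidableEq V] {B : Matrix V V ℝ} (hB : B.PosSemidef) :
    (dpart B).PosSemidef := by
  have h1 : dpart B = Matrix.diagonal (fun i => B i i) := by
    ext i j
    by_cases h : i = j
    · subst h; simp [dpart, Matrix.diagonal_apply_eq]
    · simp [dpart, h, Matrix.diagonal_apply_ne _ h]
  rw [h1]
  exact Matrix.PosSemidef.diagonal fun i => psd_diag_nonneg hB i

lemma opt_dual_schur [Fintype V] [DecidableEq V] {G : SimpleGraph V} {B : Matrix V V ℝ}
    (hB : IsOptDual G B) :
    ((vecChrom G - 1) • dpart B - opart B).PosSemidef := by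
  obtain ⟨p, hp⟩ := exists_opt_coloring G
  have hsch := schur_psd hB.1.1 (gram_psd p)
  have heq : (Matrix.of fun i j => B i j * gramMat p i j)
      = (vecChrom G - 1) • dpart B - opart B := by
    ext i j
    simp only [Matrix.of_apply, Matrix.sub_apply, Matrix.smul_apply, smul_eq_mul, dpart, opart]
    by_cases h : i = j
    · subst h
      rw [if_pos rfl, if_pos rfl, gram_apply, hp.1 i]
      ring
    · rw [if_neg h, if_neg h, gram_apply]
      have hsl := opt_dual_slack hB hp h
      linarith
  rw [← heq]
  exact hsch

end VCAux

namespace VCAux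

variable {V : Type*}

lemma clm_apply {ι : Type*} [Fintype ι] [DecidableEq ι] (f : ((ι → ℝ) →L[ℝ] ℝ)) (x : ι → ℝ) :
    f x = ∑ c, x c * f (Pi.single c 1) := by
  have hx : x = ∑ c, x c • (Pi.single c 1 : ι → ℝ) := by
    funext k
    rw [Finset.sum_apply]
    simp only [Pi.smul_apply, Pi.single_apply, smul_eq_mul, mul_ite, mul_one, mul_zero]
    rw [Finset.sum_ite_eq]
    simp
  conv_lhs => rw [hx]
  rw [map_sum]
  exact Finset.sum_congr rfl fun c _ => by rw [ContinuousLinearMap.map_smul, smul_eq_mul]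

lemma sq_psd [Fintype V] (v : V → ℝ) : (Matrix.of fun i j => v i * v j).PosSemidef := by
  refine Matrix.PosSemidef.of_dotProduct_mulVec_nonneg ?_ ?_
  · ext i j
    simp [Matrix.conjTranspose_apply, mul_comm]
  · intro x
    rw [star_trivial]
    have h1 : x ⬝ᵥ (Matrix.of fun i j => v i * v j) *ᵥ x = (∑ i, x i * v i) ^ 2 := by
      simp only [dotProduct, Matrix.mulVec, Matrix.of_apply, Finset.mul_sum]
      rw [sq, Finset.sum_mul_sum]
      exact Finset.sum_congr rfl fun i _ => Finset.sum_congr rfl fun j _ => by ring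
    rw [h1]
    positivity

lemma quad_eq_sum [Fintype V] (B : Matrix V V ℝ) (x : V → ℝ) :
    x ⬝ᵥ B *ᵥ x = ∑ i, ∑ j, B i j * (x i * x j) := by
  simp only [dotProduct, Matrix.mulVec, Finset.mul_sum]
  exact Finset.sum_congr rfl fun i _ => Finset.sum_congr rfl fun j _ => by ring

lemma exists_opt_dual [Fintype V] {G : SimpleGraph V} (hE : ∃ i j, G.Adj i j) :
    ∃ B : Matrix V V ℝ, IsOptDual G B := by
  classical
  obtain ⟨i₀, j₀, hedge₀⟩ := hE
  have hV : Nonempty V := ⟨i₀⟩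
  set g : ℝ := vecChrom G with hg
  have hg1 : 1 ≤ g := one_le_vecChrom G
  set n : ℝ := (Fintype.card V : ℝ) with hn
  have hn0 : (0:ℝ) ≤ n := Nat.cast_nonneg _
  set A : Set ((V ⊕ V × V) → ℝ) := {x | ∃ M : Matrix V V ℝ, M.PosSemidef ∧
    (∀ i, M i i < x (Sum.inl i)) ∧ ∀ i j, G.Adj i j → M i j < x (Sum.inr (i, j))} with hA
  -- A is open
  have hAopen : IsOpen A := by
    have : A = ⋃ (M : Matrix V V ℝ) (_ : M.PosSemidef),
        ((⋂ i : V, {x : (V ⊕ V × V) → ℝ | M i i < x (Sum.inl i)}) ∩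
          ⋂ (i : V) (j : V), {x : (V ⊕ V × V) → ℝ | G.Adj i j → M i j < x (Sum.inr (i, j))}) := by
      ext x
      simp only [hA, Set.mem_setOf_eq, Set.mem_iUnion, Set.mem_inter_iff, Set.mem_iInter]
      tauto
    rw [this]
    refine isOpen_iUnion fun M => isOpen_iUnion fun hM => IsOpen.inter ?_ ?_
    · refine isOpen_iInter_of_finite fun i => ?_
      exact isOpen_lt continuous_const (continuous_apply _)
    · refine isOpen_iInter_of_finite fun i => isOpen_iInter_of_finite fun j => ?_
      by_cases hadj : G.Adj i j
      · have h1 : {x : (V ⊕ V × V) → ℝ | G.Adj i j → M i j < x (Sum.inr (i, j))}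
            = {x : (V ⊕ V × V) → ℝ | M i j < x (Sum.inr (i, j))} := by
          ext x; simp [hadj]
        rw [h1]
        exact isOpen_lt continuous_const (continuous_apply _)
      · have h1 : {x : (V ⊕ V × V) → ℝ | G.Adj i j → M i j < x (Sum.inr (i, j))}
            = Set.univ := by
          ext x; simp [hadj]
        rw [h1]
        exact isOpen_univ
  -- A is convex
  have hconvaux : ∀ (a b u U v w : ℝ), 0 ≤ a → 0 ≤ b → a + b = 1 → u < U → v < w →
      a * u + b * v < a * U + b * w := by
    intro a b u U v w ha hb hab hu hv
    rcases eq_or_lt_of_le ha with h | h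
    · have hb1 : b = 1 := by linarith
      rw [← h, hb1]; simpa using hv
    · have h1 : a * u < a * U := by exact mul_lt_mul_of_pos_left hu h
      have h2 : b * v ≤ b * w := mul_le_mul_of_nonneg_left hv.le hb
      linarith
  have hAconv : Convex ℝ A := by
    rintro x ⟨M, hM, h1, h2⟩ x' ⟨M', hM', h1', h2'⟩ a b ha hb hab
    refine ⟨a • M + b • M', (psd_smul hM ha).add (psd_smul hM' hb), fun i => ?_, fun i j hij => ?_⟩
    · have := hconvaux a b (M i i) (x (Sum.inl i)) (M' i i) (x' (Sum.inl i)) ha hb hab (h1 i) (h1' i)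
      simpa [Matrix.add_apply, Matrix.smul_apply, smul_eq_mul] using this
    · have := hconvaux a b (M i j) (x (Sum.inr (i,j))) (M' i j) (x' (Sum.inr (i,j))) ha hb hab
        (h2 i j hij) (h2' i j hij)
      simpa [Matrix.add_apply, Matrix.smul_apply, smul_eq_mul] using this
  set x₀ : (V ⊕ V × V) → ℝ := Sum.elim (fun _ => g - 1) (fun _ => -1) with hx₀
  -- x₀ is not in A
  have hx₀A : x₀ ∉ A := by
    rintro ⟨M, hM, h1, h2⟩
    simp only [hx₀, Sum.elim_inl, Sum.elim_inr] at h1 h2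
    have hne : (Finset.univ : Finset V).Nonempty := Finset.univ_nonempty
    set δ : ℝ := Finset.univ.inf' hne (fun i => g - 1 - M i i) with hδ
    have hδpos : 0 < δ := by
      rw [hδ, Finset.lt_inf'_iff]
      intro i _
      have := h1 i
      linarith
    have hd2 : ∀ i, M i i ≤ g - 1 - δ := by
      intro i
      have h3 : δ ≤ g - 1 - M i i := Finset.inf'_le _ (Finset.mem_univ i)
      linarith
    obtain ⟨p, hp⟩ := lift_coloring hM hd2 (fun i j hij => (h2 i j hij).le)
    have hr0 : 0 ≤ g - 1 - δ := le_trans (psd_diag_nonneg hM i₀) (hd2 i₀)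
    have hmem : (1 + (g - 1 - δ)) ∈ Sset G := ⟨by linarith, _, p, hp⟩
    have hle := vecChrom_le hmem
    rw [← hg] at hle
    linarith
  obtain ⟨f, hf⟩ := geometric_hahn_banach_point_open hAconv hAopen hx₀A
  set z : V → ℝ := fun i => f (Pi.single (Sum.inl i) 1) with hz
  set y : V → V → ℝ := fun i j => f (Pi.single (Sum.inr (i, j)) 1) with hy
  have hrep : ∀ x : (V ⊕ V × V) → ℝ,
      f x = (∑ i, x (Sum.inl i) * z i) + ∑ i, ∑ j, x (Sum.inr (i, j)) * y i j := by
    intro x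
    rw [clm_apply f x, Fintype.sum_sum_type]
    congr 1
    rw [Fintype.sum_prod_type]
  -- base point
  set a₀ : (V ⊕ V × V) → ℝ := Sum.elim (fun _ => n + 1) (fun _ => 0) with ha₀def
  have ha₀ : a₀ ∈ A := by
    refine ⟨Matrix.of fun i j => if i = j then n else -1, simplex_psd, fun i => ?_, fun i j hij => ?_⟩
    · have h1 : (Matrix.of fun i j : V => if i = j then n else -1) i i = n := by
        rw [Matrix.of_apply, if_pos rfl]
      have h2 : a₀ (Sum.inl i) = n + 1 := by rw [ha₀def, Sum.elim_inl]
      rw [h1, h2]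
      linarith
    · have h1 : (Matrix.of fun i j : V => if i = j then n else -1) i j = -1 := by
        rw [Matrix.of_apply, if_neg hij.ne]
      have h2 : a₀ (Sum.inr (i, j)) = 0 := by rw [ha₀def, Sum.elim_inr]
      rw [h1, h2]
      linarith
  have hfa₀ : f x₀ < f a₀ := hf a₀ ha₀
  -- directional nonnegativity
  have key : ∀ v : (V ⊕ V × V) → ℝ, (∀ t : ℝ, 0 ≤ t → a₀ + t • v ∈ A) → 0 ≤ f v := by
    intro v hv
    by_contra hneg
    push_neg at hneg
    set t : ℝ := (f a₀ - f x₀) / (-f v) with ht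
    have htnn : 0 ≤ t := le_of_lt (div_pos (by linarith) (by linarith))
    have h2 := hf _ (hv t htnn)
    rw [map_add, ContinuousLinearMap.map_smul, smul_eq_mul] at h2
    have h3 : t * f v = -(f a₀ - f x₀) := by
      rw [ht, div_mul_eq_mul_div, div_eq_iff (by linarith : -f v ≠ 0)]
      ring
    linarith
  have hup : ∀ c : V ⊕ V × V, ∀ t : ℝ, 0 ≤ t → a₀ + t • (Pi.single c 1 : (V ⊕ V × V) → ℝ) ∈ A := by
    intro c t ht
    obtain ⟨M, hM, h1, h2⟩ := ha₀
    refine ⟨M, hM, fun i => ?_, fun i j hij => ?_⟩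
    · refine lt_of_lt_of_le (h1 i) ?_
      simp only [Pi.add_apply, Pi.smul_apply, smul_eq_mul]
      have : 0 ≤ t * (Pi.single c 1 : (V ⊕ V × V) → ℝ) (Sum.inl i) := by
        refine mul_nonneg ht ?_
        rw [Pi.single_apply]
        split <;> norm_num
      linarith
    · refine lt_of_lt_of_le (h2 i j hij) ?_
      simp only [Pi.add_apply, Pi.smul_apply, smul_eq_mul]
      have : 0 ≤ t * (Pi.single c 1 : (V ⊕ V × V) → ℝ) (Sum.inr (i, j)) := by
        refine mul_nonneg ht ?_
        rw [Pi.single_apply]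
        split <;> norm_num
      linarith
  have hdir : ∀ c : V ⊕ V × V, 0 ≤ f (Pi.single c 1) := fun c => key _ (hup c)
  have hznn : ∀ i, 0 ≤ z i := fun i => hdir (Sum.inl i)
  have hynn : ∀ i j, 0 ≤ y i j := fun i j => hdir (Sum.inr (i, j))
  -- free coordinates
  have hyzero : ∀ i j, ¬ G.Adj i j → y i j = 0 := by
    intro i j hnadj
    have hdown : ∀ t : ℝ, 0 ≤ t → a₀ + t • (-(Pi.single (Sum.inr (i,j)) 1 : (V ⊕ V × V) → ℝ)) ∈ A := by
      intro t ht
      obtain ⟨M, hM, h1, h2⟩ := ha₀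
      refine ⟨M, hM, fun i' => ?_, fun i' j' hij' => ?_⟩
      · have heval : (a₀ + t • (-(Pi.single (Sum.inr (i,j)) 1 : (V ⊕ V × V) → ℝ))) (Sum.inl i')
            = a₀ (Sum.inl i') := by
          simp [Pi.single_apply]
        rw [heval]; exact h1 i'
      · have hne : (Sum.inr (i', j') : V ⊕ V × V) ≠ Sum.inr (i, j) := by
          intro hc
          rw [Sum.inr.injEq, Prod.mk.injEq] at hc
          exact hnadj (hc.1 ▸ hc.2 ▸ hij')
        have heval : (a₀ + t • (-(Pi.single (Sum.inr (i,j)) 1 : (V ⊕ V × V) → ℝ))) (Sum.inr (i', j'))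
            = a₀ (Sum.inr (i', j')) := by
          simp [Pi.single_apply, hne]
        rw [heval]; exact h2 i' j' hij'
    have h1 := key _ hdown
    rw [map_neg] at h1
    have h2 := hynn i j
    rw [hy] at h2 ⊢
    linarith
  have hyii : ∀ i, y i i = 0 := fun i => hyzero i i (G.irrefl)
  -- main inequality
  have hmain : ∀ M : Matrix V V ℝ, M.PosSemidef →
      f x₀ ≤ (∑ i, M i i * z i) + ∑ i, ∑ j, M i j * y i j := by
    intro M hM
    by_contra hlt
    push_neg at hlt
    set L : ℝ := (∑ i, M i i * z i) + ∑ i, ∑ j, M i j * y i j with hL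
    set c₀ : ℝ := (∑ i, z i) + ∑ i, ∑ j, y i j with hc₀
    have hc₀nn : 0 ≤ c₀ := by
      refine add_nonneg (Finset.sum_nonneg fun i _ => hznn i) ?_
      exact Finset.sum_nonneg fun i _ => Finset.sum_nonneg fun j _ => hynn i j
    set δ : ℝ := (f x₀ - L) / (c₀ + 1) with hδ
    have hδpos : 0 < δ := div_pos (by linarith) (by linarith)
    set xM : (V ⊕ V × V) → ℝ :=
      Sum.elim (fun i => M i i + δ) (fun q : V × V => M q.1 q.2 + δ) with hxM
    have hco1 : ∀ i, xM (Sum.inl i) = M i i + δ := fun i => by rw [hxM, Sum.elim_inl]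
    have hco2 : ∀ i j, xM (Sum.inr (i, j)) = M i j + δ := fun i j => by rw [hxM, Sum.elim_inr]
    have hmem : xM ∈ A :=
      ⟨M, hM, fun i => by rw [hco1 i]; linarith, fun i j hij => by rw [hco2 i j]; linarith⟩
    have hlt2 : f x₀ < f xM := hf _ hmem
    have hfxM : f xM = ((∑ i, M i i * z i) + δ * ∑ i, z i)
        + ((∑ i, ∑ j, M i j * y i j) + δ * ∑ i, ∑ j, y i j) := by
      rw [hrep]
      congr 1
      · rw [Finset.mul_sum, ← Finset.sum_add_distrib]
        exact Finset.sum_congr rfl fun i _ => by rw [hco1 i]; ring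
      · rw [Finset.mul_sum, ← Finset.sum_add_distrib]
        refine Finset.sum_congr rfl fun i _ => ?_
        rw [Finset.mul_sum, ← Finset.sum_add_distrib]
        exact Finset.sum_congr rfl fun j _ => by rw [hco2 i j]; ring
    rw [hfxM] at hlt2
    have hfinal : f x₀ < L + δ * c₀ := by
      rw [hL, hc₀]
      rw [mul_add] at *
      linarith
    have hδc : δ * c₀ ≤ δ * (c₀ + 1) := by nlinarith
    have hδc1 : δ * (c₀ + 1) = f x₀ - L := by
      rw [hδ]
      field_simp
    linarith
  -- f x₀ value
  have hfx₀ : f x₀ = (g - 1) * (∑ i, z i) - ∑ i, ∑ j, y i j := by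
    rw [hrep]
    simp only [hx₀, Sum.elim_inl, Sum.elim_inr]
    rw [← Finset.mul_sum]
    have h2 : ∑ i, ∑ j, (-1 : ℝ) * y i j = - ∑ i, ∑ j, y i j := by
      rw [← Finset.sum_neg_distrib]
      exact Finset.sum_congr rfl fun i _ => by
        rw [← Finset.sum_neg_distrib]
        exact Finset.sum_congr rfl fun j _ => neg_one_mul _
    rw [h2]
    ring
  -- Σ z > 0
  have hZnn : 0 ≤ ∑ i, z i := Finset.sum_nonneg fun i _ => hznn i
  have hYnn : 0 ≤ ∑ i, ∑ j, y i j :=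
    Finset.sum_nonneg fun i _ => Finset.sum_nonneg fun j _ => hynn i j
  have hZpos : 0 < ∑ i, z i := by
    rcases hZnn.lt_or_eq with h | h
    · exact h
    have hZ0 : ∑ i, z i = 0 := h.symm
    have hzero : ∀ i, z i = 0 := by
      intro i
      exact (Finset.sum_eq_zero_iff_of_nonneg (fun i _ => hznn i)).mp hZ0 i (Finset.mem_univ i)
    exfalso
    -- first show Y = 0
    have hc2 : ∀ c : ℝ, 0 ≤ c → f x₀ ≤ -c * ∑ i, ∑ j, y i j := by
      intro c hc
      have hMc := hmain (c • Matrix.of fun i j : V => if i = j then n else -1)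
        (psd_smul simplex_psd hc)
      have he1 : ∑ i, (c • Matrix.of fun i j : V => if i = j then n else -1) i i * z i = 0 := by
        refine Finset.sum_eq_zero fun i _ => by rw [hzero i, mul_zero]
      have he2 : ∑ i, ∑ j, (c • Matrix.of fun i j : V => if i = j then n else -1) i j * y i j
          = -c * ∑ i, ∑ j, y i j := by
        rw [Finset.mul_sum]
        refine Finset.sum_congr rfl fun i _ => ?_
        rw [Finset.mul_sum]
        refine Finset.sum_congr rfl fun j _ => ?_
        by_cases hij : i = j
        · subst hij
          rw [hyii i]
          simp
        · simp only [Matrix.smul_apply, Matrix.of_apply, if_neg hij, smul_eq_mul]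
          ring
      rw [he1, he2, zero_add] at hMc
      exact hMc
    have hfx₀' : f x₀ = - ∑ i, ∑ j, y i j := by
      rw [hfx₀, hZ0]
      ring
    have hY0 : ∑ i, ∑ j, y i j = 0 := by
      have h2 := hc2 2 (by norm_num)
      rw [hfx₀'] at h2
      linarith
    have hyall : ∀ i j, y i j = 0 := by
      intro i j
      have hrow : ∀ i', ∑ j', y i' j' = 0 := by
        intro i'
        exact (Finset.sum_eq_zero_iff_of_nonneg (fun i _ =>
          Finset.sum_nonneg fun j _ => hynn _ _)).mp hY0 i' (Finset.mem_univ i')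
      exact (Finset.sum_eq_zero_iff_of_nonneg (fun j _ => hynn i j)).mp (hrow i) j
        (Finset.mem_univ j)
    have hfa₀0 : f a₀ = 0 := by
      rw [hrep]
      simp only [ha₀def, Sum.elim_inl, Sum.elim_inr]
      rw [Finset.sum_eq_zero fun i _ => by rw [hzero i, mul_zero],
        Finset.sum_eq_zero fun i _ => Finset.sum_eq_zero fun j _ => by rw [hyall i j, mul_zero]]
      ring
    have hfx₀0 : f x₀ = 0 := by
      rw [hfx₀', hY0]
      ring
    rw [hfa₀0, hfx₀0] at hfa₀
    exact lt_irrefl _ hfa₀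
  set Z : ℝ := ∑ i, z i with hZ
  have hZne : Z ≠ 0 := ne_of_gt hZpos
  set B : Matrix V V ℝ :=
    Matrix.of fun i j => if i = j then z i / Z else (y i j + y j i) / (2 * Z) with hB
  -- pairing identity
  have hpair : ∀ M : Matrix V V ℝ, (∀ i j, M i j = M j i) →
      ∑ i, ∑ j, B i j * M i j
        = ((∑ i, M i i * z i) + ∑ i, ∑ j, M i j * y i j) / Z := by
    intro M hsym
    have hswap : ∑ i, ∑ j, M i j * y j i = ∑ i, ∑ j, M i j * y i j := by
      rw [Finset.sum_comm]
      exact Finset.sum_congr rfl fun i _ => Finset.sum_congr rfl fun j _ => by rw [hsym j i]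
    have hstep : ∑ i, ∑ j, B i j * M i j
        = ∑ i, ∑ j, ((if i = j then M i i * z i else 0) / Z
            + M i j * y i j / (2 * Z) + M i j * y j i / (2 * Z)) := by
      refine Finset.sum_congr rfl fun i _ => Finset.sum_congr rfl fun j _ => ?_
      by_cases h : i = j
      · subst h
        have hBe : B i i = z i / Z := by rw [hB]; simp
        rw [hBe, hyii i, if_pos rfl]
        ring
      · have hBe : B i j = (y i j + y j i) / (2 * Z) := by
          rw [hB]
          simp only [Matrix.of_apply, if_neg h]
        rw [hBe, if_neg h]
        ring
    rw [hstep]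
    have hsplit : ∀ i, ∑ j, ((if i = j then M i i * z i else 0) / Z
        + M i j * y i j / (2 * Z) + M i j * y j i / (2 * Z))
        = M i i * z i / Z + (∑ j, M i j * y i j / (2 * Z)) + ∑ j, M i j * y j i / (2 * Z) := by
      intro i
      rw [Finset.sum_add_distrib, Finset.sum_add_distrib]
      have e1 : ∑ j, (if i = j then M i i * z i else 0) / Z = M i i * z i / Z := by
        rw [← Finset.sum_div, Finset.sum_ite_eq]
        simp
      rw [e1]
    rw [Finset.sum_congr rfl fun i _ => hsplit i]
    rw [Finset.sum_add_distrib, Finset.sum_add_distrib]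
    have hd1 : ∑ i, ∑ j, M i j * y i j / (2 * Z) = (∑ i, ∑ j, M i j * y i j) / (2 * Z) := by
      rw [Finset.sum_congr rfl fun i (_ : i ∈ Finset.univ) =>
        (Finset.sum_div Finset.univ (fun j => M i j * y i j) (2 * Z)).symm, ← Finset.sum_div]
    have hd2 : ∑ i, ∑ j, M i j * y j i / (2 * Z) = (∑ i, ∑ j, M i j * y j i) / (2 * Z) := by
      rw [Finset.sum_congr rfl fun i (_ : i ∈ Finset.univ) =>
        (Finset.sum_div Finset.univ (fun j => M i j * y j i) (2 * Z)).symm, ← Finset.sum_div]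
    have hd0 : ∑ i, M i i * z i / Z = (∑ i, M i i * z i) / Z := (Finset.sum_div _ _ _).symm
    rw [hd0, hd1, hd2, hswap]
    field_simp
    ring
  -- B is PSD
  have hBpsd : B.PosSemidef := by
    refine Matrix.PosSemidef.of_dotProduct_mulVec_nonneg ?_ ?_
    · ext i j
      simp only [Matrix.conjTranspose_apply, star_trivial, hB, Matrix.of_apply]
      by_cases h : i = j
      · subst h; rfl
      · rw [if_neg h, if_neg (Ne.symm h)]
        ring
    · intro x
      rw [star_trivial]
      by_contra hneg
      push_neg at hneg
      have hquad : x ⬝ᵥ B *ᵥ x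
          = ((∑ i, (x i * x i) * z i) + ∑ i, ∑ j, (x i * x j) * y i j) / Z := by
        rw [quad_eq_sum]
        have := hpair (Matrix.of fun i j => x i * x j) (fun i j => by simp [mul_comm])
        simp only [Matrix.of_apply] at this
        rw [this]
      set L₁ : ℝ := (∑ i, (x i * x i) * z i) + ∑ i, ∑ j, (x i * x j) * y i j with hL₁
      have hL₁neg : L₁ < 0 := by
        have hq2 : L₁ = (x ⬝ᵥ B *ᵥ x) * Z := by
          rw [hquad, div_mul_cancel₀ _ hZne]
        rw [hq2]
        exact mul_neg_of_neg_of_pos hneg hZpos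
      set c : ℝ := Real.sqrt (max (f x₀ / L₁) 0 + 1) with hc
      have hcsq : c ^ 2 = max (f x₀ / L₁) 0 + 1 := by
        rw [hc]
        exact Real.sq_sqrt (by positivity)
      have hcgt : f x₀ / L₁ < c ^ 2 := by
        rw [hcsq]
        have := le_max_left (f x₀ / L₁) 0
        linarith
      have hMc := hmain (Matrix.of fun i j => (c * x i) * (c * x j)) (sq_psd fun i => c * x i)
      have he1 : ∑ i, (Matrix.of fun i j => (c * x i) * (c * x j)) i i * z i
          = c ^ 2 * ∑ i, (x i * x i) * z i := by
        rw [Finset.mul_sum]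
        exact Finset.sum_congr rfl fun i _ => by simp only [Matrix.of_apply]; ring
      have he2 : ∑ i, ∑ j, (Matrix.of fun i j => (c * x i) * (c * x j)) i j * y i j
          = c ^ 2 * ∑ i, ∑ j, (x i * x j) * y i j := by
        rw [Finset.mul_sum]
        refine Finset.sum_congr rfl fun i _ => ?_
        rw [Finset.mul_sum]
        exact Finset.sum_congr rfl fun j _ => by simp only [Matrix.of_apply]; ring
      rw [he1, he2, ← mul_add, ← hL₁] at hMc
      -- f x₀ ≤ c² L₁, but c² > f x₀ / L₁ and L₁ < 0 gives c² L₁ < f x₀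
      have hcontr : c ^ 2 * L₁ < f x₀ := by
        have h1 : c ^ 2 * L₁ < (f x₀ / L₁) * L₁ := by
          exact mul_lt_mul_of_neg_right hcgt hL₁neg
        rw [div_mul_cancel₀ _ (ne_of_lt hL₁neg)] at h1
        exact h1
      linarith
  -- trace
  have htrace : B.trace = 1 := by
    rw [trace_eq_sum]
    have : ∀ i, B i i = z i / Z := fun i => by rw [hB]; simp
    rw [Finset.sum_congr rfl fun i _ => this i, ← Finset.sum_div, ← hZ, div_self hZne]
  -- nonneg
  have hBnn : ∀ i j, 0 ≤ B i j := by
    intro i j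
    rw [hB]
    simp only [Matrix.of_apply]
    by_cases h : i = j
    · rw [if_pos h]
      exact div_nonneg (hznn i) hZpos.le
    · rw [if_neg h]
      have h1 := hynn i j
      have h2 := hynn j i
      exact div_nonneg (by linarith) (by linarith)
  -- support
  have hBsupp : ∀ i j, i ≠ j → ¬ G.Adj i j → B i j = 0 := by
    intro i j hij hnadj
    rw [hB]
    simp only [Matrix.of_apply, if_neg hij]
    rw [hyzero i j hnadj, hyzero j i fun h => hnadj h.symm]
    simp
  have hdual : IsDualSol G B := ⟨hBpsd, hBsupp, hBnn, htrace⟩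
  -- value ≥ g
  have hzero_le : f x₀ ≤ 0 := by
    have := hmain 0 Matrix.PosSemidef.zero
    simpa using this
  have hvalge : g ≤ ∑ i, ∑ j, B i j := by
    have h1 := hpair (Matrix.of fun _ _ => (1:ℝ)) (fun i j => rfl)
    have h2 : ∑ i, ∑ j, B i j * (Matrix.of fun _ _ => (1:ℝ)) i j = ∑ i, ∑ j, B i j := by
      exact Finset.sum_congr rfl fun i _ => Finset.sum_congr rfl fun j _ => by
        simp
    rw [h2] at h1
    have h3 : (∑ i, (Matrix.of fun _ _ => (1:ℝ)) i i * z i) = Z := by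
      rw [hZ]
      exact Finset.sum_congr rfl fun i _ => by simp
    have h4 : ∑ i, ∑ j, (Matrix.of fun _ _ => (1:ℝ)) i j * y i j = ∑ i, ∑ j, y i j := by
      exact Finset.sum_congr rfl fun i _ => Finset.sum_congr rfl fun j _ => by simp
    rw [h3, h4] at h1
    -- from hzero_le and hfx₀ : (g-1) Z ≤ Y
    rw [hfx₀] at hzero_le
    rw [h1]
    rw [le_div_iff₀ hZpos]
    nlinarith
  have hvalle : ∑ i, ∑ j, B i j ≤ g := by
    refine le_csInf (Sset_nonempty G) fun t ht => weak_duality hdual ht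
  exact ⟨B, hdual, le_antisymm hvalle hvalge⟩

end VCAux

namespace VCAux

variable {V α β : Type*}

lemma sum_dpart [Fintype V] [DecidableEq V] (B : Matrix V V ℝ) :
    ∑ i, ∑ j, dpart B i j = ∑ i, B i i := by
  refine Finset.sum_congr rfl fun i _ => ?_
  have h1 : ∀ j, dpart B i j = if i = j then B i j else 0 := fun j => rfl
  rw [Finset.sum_congr rfl fun j _ => h1 j, Finset.sum_ite_eq]
  simp

lemma sum_opart [Fintype V] [DecidableEq V] (B : Matrix V V ℝ) :
    ∑ i, ∑ j, opart B i j = (∑ i, ∑ j, B i j) - ∑ i, B i i := by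
  have h1 : ∀ i j, opart B i j = B i j - dpart B i j := by
    intro i j
    have := congrFun (congrFun (dpart_add_opart B) i) j
    simp only [Matrix.add_apply] at this
    linarith
  rw [Finset.sum_congr rfl fun i (_ : i ∈ Finset.univ) => Finset.sum_congr rfl
    fun j (_ : j ∈ Finset.univ) => h1 i j]
  rw [Finset.sum_congr rfl fun i (_ : i ∈ Finset.univ) => Finset.sum_sub_distrib (fun j => B i j) (fun j => dpart B i j),
    Finset.sum_sub_distrib, sum_dpart]

lemma trace_dpart [Fintype V] [DecidableEq V] (B : Matrix V V ℝ) :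
    ∑ i, dpart B i i = ∑ i, B i i :=
  Finset.sum_congr rfl fun i _ => by
    show (if i = i then B i i else 0) = B i i
    rw [if_pos rfl]

lemma opart_diag [DecidableEq V] (B : Matrix V V ℝ) (i : V) : opart B i i = 0 := by
  show (if i = i then 0 else B i i) = 0
  rw [if_pos rfl]

lemma sum_kron [Fintype α] [Fintype β] (A : Matrix α α ℝ) (B : Matrix β β ℝ) :
    ∑ x : α × β, ∑ y : α × β, (A ⊗ₖ B) x y = (∑ i, ∑ j, A i j) * (∑ l, ∑ k, B l k) := by
  calc ∑ x : α × β, ∑ y : α × β, (A ⊗ₖ B) x y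
      = ∑ i, ∑ l, ∑ j, ∑ k, A i j * B l k := by
        rw [Fintype.sum_prod_type]
        refine Finset.sum_congr rfl fun i _ => Finset.sum_congr rfl fun l _ => ?_
        rw [Fintype.sum_prod_type]
        exact Finset.sum_congr rfl fun _ _ => Finset.sum_congr rfl fun _ _ => rfl
    _ = ∑ i, ∑ l, (∑ j, A i j) * (∑ k, B l k) := by
        refine Finset.sum_congr rfl fun i _ => Finset.sum_congr rfl fun l _ => ?_
        rw [Finset.sum_mul_sum]
    _ = (∑ i, ∑ j, A i j) * (∑ l, ∑ k, B l k) := by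
        rw [Finset.sum_mul_sum]

lemma trace_kron_diag [Fintype α] [Fintype β] (A : Matrix α α ℝ) (B : Matrix β β ℝ) :
    ∑ x : α × β, (A ⊗ₖ B) x x = (∑ i, A i i) * (∑ l, B l l) := by
  rw [Fintype.sum_prod_type, Finset.sum_mul_sum]
  exact Finset.sum_congr rfl fun _ _ => Finset.sum_congr rfl fun _ _ => rfl

lemma vecChrom_catProd_le [Fintype α] [Fintype β] (G : SimpleGraph α) (H : SimpleGraph β) :
    vecChrom (catProd G H) ≤ vecChrom G := by
  refine csInf_le_csInf (Sset_bddBelow _) (Sset_nonempty G) ?_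
  rintro t ⟨ht1, d, p, hp1, hp2⟩
  exact ⟨ht1, d, fun x => p x.1, fun x => hp1 x.1, fun x y hxy => hp2 _ _ hxy.1⟩

lemma vecChrom_catProd [Fintype α] [Fintype β] (G : SimpleGraph α) (H : SimpleGraph β)
    (hlt : vecChrom G < vecChrom H) : vecChrom (catProd G H) = vecChrom G := by
  classical
  refine le_antisymm (vecChrom_catProd_le G H) ?_
  by_cases hGE : ∃ i j, G.Adj i j
  case neg =>
    push_neg at hGE
    have h1 : vecChrom G = 1 := vecChrom_edgeless fun i j => hGE i j
    rw [h1]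
    exact one_le_vecChrom _
  case pos =>
  have hg1 : 1 ≤ vecChrom G := one_le_vecChrom G
  have hHE : ∃ l k, H.Adj l k := exists_edge_of_one_lt (by linarith)
  obtain ⟨B₁, hB₁⟩ := exists_opt_dual hGE
  obtain ⟨B₂, hB₂⟩ := exists_opt_dual hHE
  set g : ℝ := vecChrom G with hg
  set h : ℝ := vecChrom H with hh
  set a : ℝ := g - 1 with ha
  set b : ℝ := h - 1 with hb
  have hbpos : 0 < b := by rw [hb]; simp only [hh]; linarith
  have hba : a ≤ b := by rw [ha, hb]; simp only [hg, hh]; linarith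
  have ha0 : 0 ≤ a := by rw [ha]; simp only [hg]; linarith
  have hD₁ := dpart_psd hB₁.1.1
  have hD₂ := dpart_psd hB₂.1.1
  have hS₁ : (a • dpart B₁ - opart B₁).PosSemidef := opt_dual_schur hB₁
  have hS₂ : (b • dpart B₂ - opart B₂).PosSemidef := opt_dual_schur hB₂
  have hcombo : (b • ((dpart B₁) ⊗ₖ (dpart B₂)) + (opart B₁) ⊗ₖ (opart B₂)).PosSemidef := by
    have hb1 : b + 1 ≠ 0 := by positivity
    have hid : b • ((dpart B₁) ⊗ₖ (dpart B₂)) + (opart B₁) ⊗ₖ (opart B₂)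
        = (b / (b + 1)) • (B₁ ⊗ₖ B₂)
          + (1 / (b + 1)) • ((a • dpart B₁ - opart B₁) ⊗ₖ (b • dpart B₂ - opart B₂))
          + ((b - a) / (b + 1)) • ((dpart B₁) ⊗ₖ (b • dpart B₂ - opart B₂)) := by
      ext ⟨i, l⟩ ⟨j, k⟩
      have hB1e : B₁ i j = dpart B₁ i j + opart B₁ i j := by
        have := congrFun (congrFun (dpart_add_opart B₁) i) j
        simp only [Matrix.add_apply] at this
        linarith
      have hB2e : B₂ l k = dpart B₂ l k + opart B₂ l k := by
        have := congrFun (congrFun (dpart_add_opart B₂) l) k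
        simp only [Matrix.add_apply] at this
        linarith
      simp only [Matrix.add_apply, Matrix.smul_apply, Matrix.kroneckerMap_apply,
        Matrix.sub_apply, smul_eq_mul, hB1e, hB2e]
      field_simp
      ring
    rw [hid]
    have hk1 := kron_psd hB₁.1.1 hB₂.1.1
    have hk2 := kron_psd hS₁ hS₂
    have hk3 := kron_psd hD₁ hS₂
    exact ((psd_smul hk1 (by positivity)).add
      (psd_smul hk2 (by positivity))).add
      (psd_smul hk3 (div_nonneg (by linarith) (by linarith)))
  set Bp : Matrix (α × β) (α × β) ℝ :=
    (dpart B₁) ⊗ₖ (dpart B₂) + (1 / b) • ((opart B₁) ⊗ₖ (opart B₂)) with hBp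
  have hBp_eq : Bp = (1 / b) • (b • ((dpart B₁) ⊗ₖ (dpart B₂)) + (opart B₁) ⊗ₖ (opart B₂)) := by
    rw [hBp, smul_add, smul_smul]
    congr 1
    rw [one_div, inv_mul_cancel₀ (ne_of_gt hbpos), one_smul]
  have hBppsd : Bp.PosSemidef := by
    rw [hBp_eq]
    exact psd_smul hcombo (by positivity)
  have hBpapply : ∀ x y : α × β, Bp x y
      = dpart B₁ x.1 y.1 * dpart B₂ x.2 y.2 + (1 / b) * (opart B₁ x.1 y.1 * opart B₂ x.2 y.2) := by
    intro x y
    rw [hBp]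
    simp only [Matrix.add_apply, Matrix.smul_apply, Matrix.kroneckerMap_apply, smul_eq_mul]
  have hsupp : ∀ x y : α × β, x ≠ y → ¬ (catProd G H).Adj x y → Bp x y = 0 := by
    intro x y hxy hnadj
    rw [hBpapply]
    have hD0 : dpart B₁ x.1 y.1 * dpart B₂ x.2 y.2 = 0 := by
      by_cases h1 : x.1 = y.1
      · by_cases h2 : x.2 = y.2
        · exact absurd (Prod.ext h1 h2) hxy
        · have : dpart B₂ x.2 y.2 = 0 := by
            show (if x.2 = y.2 then B₂ x.2 y.2 else 0) = 0
            rw [if_neg h2]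
          rw [this, mul_zero]
      · have : dpart B₁ x.1 y.1 = 0 := by
          show (if x.1 = y.1 then B₁ x.1 y.1 else 0) = 0
          rw [if_neg h1]
        rw [this, zero_mul]
    have hO0 : opart B₁ x.1 y.1 * opart B₂ x.2 y.2 = 0 := by
      by_cases h1 : x.1 = y.1
      · have : opart B₁ x.1 y.1 = 0 := by
          show (if x.1 = y.1 then 0 else B₁ x.1 y.1) = 0
          rw [if_pos h1]
        rw [this, zero_mul]
      · by_cases h2 : x.2 = y.2
        · have : opart B₂ x.2 y.2 = 0 := by
            show (if x.2 = y.2 then 0 else B₂ x.2 y.2) = 0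
            rw [if_pos h2]
          rw [this, mul_zero]
        · by_cases hB1z : B₁ x.1 y.1 = 0
          · have : opart B₁ x.1 y.1 = 0 := by
              show (if x.1 = y.1 then 0 else B₁ x.1 y.1) = 0
              rw [if_neg h1]
              exact hB1z
            rw [this, zero_mul]
          · by_cases hB2z : B₂ x.2 y.2 = 0
            · have : opart B₂ x.2 y.2 = 0 := by
                show (if x.2 = y.2 then 0 else B₂ x.2 y.2) = 0
                rw [if_neg h2]
                exact hB2z
              rw [this, mul_zero]
            · exfalso
              have hadj1 : G.Adj x.1 y.1 := by
                by_contra hn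
                exact hB1z (hB₁.1.2.1 _ _ h1 hn)
              have hadj2 : H.Adj x.2 y.2 := by
                by_contra hn
                exact hB2z (hB₂.1.2.1 _ _ h2 hn)
              exact hnadj ⟨hadj1, hadj2⟩
    rw [hD0, hO0, mul_zero, add_zero]
  have hnn : ∀ x y : α × β, 0 ≤ Bp x y := by
    intro x y
    rw [hBpapply]
    have hd1 : 0 ≤ dpart B₁ x.1 y.1 := by
      show 0 ≤ if x.1 = y.1 then B₁ x.1 y.1 else 0
      split
      · exact hB₁.1.2.2.1 _ _
      · exact le_rfl
    have hd2 : 0 ≤ dpart B₂ x.2 y.2 := by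
      show 0 ≤ if x.2 = y.2 then B₂ x.2 y.2 else 0
      split
      · exact hB₂.1.2.2.1 _ _
      · exact le_rfl
    have ho1 : 0 ≤ opart B₁ x.1 y.1 := by
      show 0 ≤ if x.1 = y.1 then 0 else B₁ x.1 y.1
      split
      · exact le_rfl
      · exact hB₁.1.2.2.1 _ _
    have ho2 : 0 ≤ opart B₂ x.2 y.2 := by
      show 0 ≤ if x.2 = y.2 then 0 else B₂ x.2 y.2
      split
      · exact le_rfl
      · exact hB₂.1.2.2.1 _ _
    have hb' : (0:ℝ) ≤ 1 / b := by positivity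
    positivity
  have htr₁ : ∑ i, B₁ i i = 1 := by rw [← trace_eq_sum]; exact hB₁.1.2.2.2
  have htr₂ : ∑ l, B₂ l l = 1 := by rw [← trace_eq_sum]; exact hB₂.1.2.2.2
  have htrace : Bp.trace = 1 := by
    rw [trace_eq_sum]
    have h1 : ∀ x : α × β, Bp x x = ((dpart B₁) ⊗ₖ (dpart B₂)) x x := by
      intro x
      rw [hBpapply, opart_diag, opart_diag, zero_mul, mul_zero, add_zero]
      rfl
    rw [Finset.sum_congr rfl fun x (_ : x ∈ Finset.univ) => h1 x, trace_kron_diag,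
      trace_dpart, trace_dpart, htr₁, htr₂, one_mul]
  have hdual : IsDualSol (catProd G H) Bp := ⟨hBppsd, hsupp, hnn, htrace⟩
  have hsum₁ : ∑ i, ∑ j, B₁ i j = g := hB₁.2
  have hsum₂ : ∑ l, ∑ k, B₂ l k = h := hB₂.2
  have hvalue : ∑ x, ∑ y, Bp x y = g := by
    have h1 : ∀ x y : α × β, Bp x y = ((dpart B₁) ⊗ₖ (dpart B₂)) x y
        + (1 / b) * (((opart B₁) ⊗ₖ (opart B₂)) x y) := by
      intro x y
      rw [hBpapply]
      simp only [Matrix.kroneckerMap_apply]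
    rw [Finset.sum_congr rfl fun x (_ : x ∈ Finset.univ) => Finset.sum_congr rfl
      fun y (_ : y ∈ Finset.univ) => h1 x y]
    rw [Finset.sum_congr rfl fun x (_ : x ∈ Finset.univ) => Finset.sum_add_distrib
        (f := fun y => ((dpart B₁) ⊗ₖ (dpart B₂)) x y)
        (g := fun y => (1 / b) * (((opart B₁) ⊗ₖ (opart B₂)) x y)),
      Finset.sum_add_distrib]
    have h2 : ∑ x : α × β, ∑ y : α × β, (1 / b) * (((opart B₁) ⊗ₖ (opart B₂)) x y)
        = (1 / b) * ∑ x : α × β, ∑ y : α × β, ((opart B₁) ⊗ₖ (opart B₂)) x y := by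
      rw [Finset.mul_sum]
      refine Finset.sum_congr rfl fun x _ => ?_
      rw [Finset.mul_sum]
    rw [h2, sum_kron, sum_kron, sum_dpart, sum_dpart, sum_opart, sum_opart,
      htr₁, htr₂, hsum₁, hsum₂, one_mul]
    have hbne : b ≠ 0 := ne_of_gt hbpos
    have hb' : h - 1 = b := hb.symm
    rw [hb']
    field_simp
    ring
  refine le_csInf (Sset_nonempty _) fun t ht => ?_
  have := weak_duality hdual ht
  rw [hvalue] at this
  exact this

end VCAux

namespace VCAux

variable {V : Type*}

lemma mulVec_single' [Fintype V] [DecidableEq V] (K : Matrix V V ℝ) (q : V) (z : V) :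
    (K *ᵥ Pi.single q 1) z = K z q := by
  simp [Matrix.mulVec, dotProduct_single]

end VCAux



/-- If `χ_v(G) < χ_v(H)` then `rk(G × H) ≥ rk(G)`, with equality iff
every optimal vector coloring of `G × H` is induced by `G` (its Gram matrix is `M ⊗ J`
with `M` the Gram matrix of an optimal vector coloring of `G`). -/
theorem rank_product_of_lt {α β : Type*} [Fintype α] [Fintype β]
    (G : SimpleGraph α) (H : SimpleGraph β) (h : vecChrom G < vecChrom H) :
    grk G ≤ grk (catProd G H) ∧
      (grk (catProd G H) = grk G ↔
        ∀ W : Matrix (α × β) (α × β) ℝ, IsOptGram (catProd G H) W →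
          ∃ M : Matrix α α ℝ, IsOptGram G M ∧ W = M ⊗ₖ allOnes β) := by
  classical
  have hg1 : 1 ≤ vecChrom G := VCAux.one_le_vecChrom G
  have hh1 : 1 < vecChrom H := lt_of_le_of_lt hg1 h
  obtain ⟨l₀, k₀, hlk⟩ := VCAux.exists_edge_of_one_lt hh1
  have hβ : Nonempty β := ⟨l₀⟩
  have hs : vecChrom (catProd G H) = vecChrom G := VCAux.vecChrom_catProd G H h
  set SG := {r : ℕ | ∃ M : Matrix α α ℝ, IsOptGram G M ∧ M.rank = r} with hSG
  set SP := {r : ℕ | ∃ M : Matrix (α × β) (α × β) ℝ,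
    IsOptGram (catProd G H) M ∧ M.rank = r} with hSP
  have hgrkG : grk G = sSup SG := rfl
  have hgrkP : grk (catProd G H) = sSup SP := rfl
  have hSGbdd : BddAbove SG := ⟨Fintype.card α, fun r hr => by
    obtain ⟨M, _, hr⟩ := hr
    exact hr ▸ M.rank_le_card_width⟩
  have hSPbdd : BddAbove SP := ⟨Fintype.card (α × β), fun r hr => by
    obtain ⟨M, _, hr⟩ := hr
    exact hr ▸ M.rank_le_card_width⟩
  obtain ⟨p₀, hp₀⟩ := VCAux.exists_opt_coloring G
  have hSGne : SG.Nonempty := ⟨(gramMat p₀).rank, gramMat p₀, ⟨_, p₀, hp₀, rfl⟩, rfl⟩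
  obtain ⟨pP, hpP⟩ := VCAux.exists_opt_coloring (catProd G H)
  have hSPne : SP.Nonempty := ⟨(gramMat pP).rank, gramMat pP, ⟨_, pP, hpP, rfl⟩, rfl⟩
  have hinduced : ∀ {d : ℕ} (q : α → Fin d → ℝ), IsVecColoring G (vecChrom G) q →
      IsOptGram (catProd G H) (gramMat q ⊗ₖ allOnes β) ∧
        (gramMat q ⊗ₖ allOnes β).rank = (gramMat q).rank := by
    intro d q hq
    have hkron := VCAux.gram_comp_fst_eq_kron (β := β) q
    constructor
    · refine ⟨d, fun x => q x.1, ⟨fun x => ?_, fun x y hxy => hq.2 _ _ hxy.1⟩, hkron.symm⟩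
      rw [hs]
      exact hq.1 x.1
    · rw [← hkron]
      exact VCAux.rank_gram_comp_fst q
  have part1 : grk G ≤ grk (catProd G H) := by
    rw [hgrkG, hgrkP]
    refine csSup_le hSGne fun r hr => ?_
    obtain ⟨M, hMopt, hMr⟩ := hr
    obtain ⟨d, q, hq, hMq⟩ := hMopt
    subst hMq
    exact le_csSup hSPbdd ⟨_, (hinduced q hq).1, by rw [(hinduced q hq).2, hMr]⟩
  refine ⟨part1, ?_, ?_⟩
  · -- equality → all induced
    intro heq W hW
    have hmem : grk G ∈ SG := by
      rw [hgrkG]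
      exact Nat.sSup_mem hSGne hSGbdd
    obtain ⟨M₀, hM₀opt, hM₀rank⟩ := hmem
    obtain ⟨d₀, q₀, hq₀, hM₀q⟩ := hM₀opt
    subst hM₀q
    obtain ⟨dW, pW, hpW, hWq⟩ := hW
    subst hWq
    set K : Matrix (α × β) (α × β) ℝ := gramMat q₀ ⊗ₖ allOnes β with hK
    have hKrank : K.rank = grk G := by rw [(hinduced q₀ hq₀).2, hM₀rank]
    have hKgram : K = gramMat (fun x : α × β => q₀ x.1) :=
      (VCAux.gram_comp_fst_eq_kron q₀).symm
    have hKpsd : K.PosSemidef := by rw [hKgram]; exact VCAux.gram_psd _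
    have hWpsd := VCAux.gram_psd pW
    set W' : Matrix (α × β) (α × β) ℝ := (1/2 : ℝ) • gramMat pW + (1/2 : ℝ) • K with hW'
    have hA := VCAux.psd_smul hWpsd (by norm_num : (0:ℝ) ≤ 1/2)
    have hB := VCAux.psd_smul hKpsd (by norm_num : (0:ℝ) ≤ 1/2)
    have hW'psd : W'.PosSemidef := hA.add hB
    obtain ⟨p', hp'⟩ := VCAux.psd_to_gram hW'psd
    have hW'apply : ∀ x y, W' x y = (1/2) * gramMat pW x y + (1/2) * K x y := by
      intro x y
      rw [hW']
      simp [Matrix.add_apply, Matrix.smul_apply, smul_eq_mul]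
    have hW'opt : IsOptGram (catProd G H) W' := by
      refine ⟨_, p', ⟨fun x => ?_, fun x y hxy => ?_⟩, hp'⟩
      · have h1 : p' x ⬝ᵥ p' x = W' x x := by rw [hp']; rfl
        have h3 : K x x = vecChrom G - 1 := by
          rw [hKgram]
          exact hq₀.1 x.1
        have h2 : gramMat pW x x = vecChrom (catProd G H) - 1 := hpW.1 x
        rw [h1, hW'apply, h2, h3, hs]
        ring
      · have h1 : p' x ⬝ᵥ p' y = W' x y := by rw [hp']; rfl
        have h2 := hpW.2 x y hxy
        have h3 : K x y ≤ -1 := by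
          rw [hKgram]
          exact hq₀.2 _ _ hxy.1
        rw [h1, hW'apply]
        have h4 : gramMat pW x y ≤ -1 := h2
        linarith
    have hW'le : W'.rank ≤ grk G := by
      have h1 := le_csSup hSPbdd (⟨W', hW'opt, rfl⟩ : W'.rank ∈ SP)
      rw [← hgrkP, heq] at h1
      exact h1
    have hker1 : ∀ x : α × β → ℝ, W' *ᵥ x = 0 → K *ᵥ x = 0 ∧ gramMat pW *ᵥ x = 0 := by
      intro x hx
      have hx2 : ((1/2 : ℝ) • gramMat pW + (1/2 : ℝ) • K) *ᵥ x = 0 := by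
        rw [← hW']
        exact hx
      have hx3 : ((1/2 : ℝ) • K + (1/2 : ℝ) • gramMat pW) *ᵥ x = 0 := by
        rw [add_comm]
        exact hx2
      have h1 := VCAux.psd_add_kernel hB hA hx3
      have h2 := VCAux.psd_add_kernel hA hB hx2
      rw [Matrix.smul_mulVec, smul_eq_zero] at h1 h2
      constructor
      · rcases h1 with h | h
        · norm_num at h
        · exact h
      · rcases h2 with h | h
        · norm_num at h
        · exact h
    have hkerle : LinearMap.ker W'.mulVecLin ≤ LinearMap.ker K.mulVecLin := by
      intro x hx
      rw [LinearMap.mem_ker, Matrix.mulVecLin_apply] at hx ⊢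
      exact (hker1 x hx).1
    have hrge : K.rank ≤ W'.rank := VCAux.rank_le_of_ker_le hkerle
    have hreq : W'.rank = K.rank := le_antisymm (by rw [hKrank]; exact hW'le) hrge
    have hkereq : LinearMap.ker W'.mulVecLin = LinearMap.ker K.mulVecLin := by
      refine Submodule.eq_of_le_of_finrank_le hkerle ?_
      have e1 := LinearMap.finrank_range_add_finrank_ker W'.mulVecLin
      have e2 := LinearMap.finrank_range_add_finrank_ker K.mulVecLin
      have e3 : W'.rank = Module.finrank ℝ (LinearMap.range W'.mulVecLin) := rfl
      have e4 : K.rank = Module.finrank ℝ (LinearMap.range K.mulVecLin) := rfl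
      omega
    have hkerW : ∀ x : α × β → ℝ, K *ᵥ x = 0 → gramMat pW *ᵥ x = 0 := by
      intro x hx
      have hx' : x ∈ LinearMap.ker K.mulVecLin := by
        rwa [LinearMap.mem_ker, Matrix.mulVecLin_apply]
      rw [← hkereq] at hx'
      rw [LinearMap.mem_ker, Matrix.mulVecLin_apply] at hx'
      exact (hker1 x hx').2
    have hconst : ∀ (xx : α × β) (j : α) (k k' : β),
        gramMat pW xx (j, k) = gramMat pW xx (j, k') := by
      intro xx j k k'
      set v : α × β → ℝ :=
        Pi.single ((j, k) : α × β) 1 - Pi.single ((j, k') : α × β) 1 with hv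
      have hKv : K *ᵥ v = 0 := by
        funext zz
        rw [hv, Matrix.mulVec_sub]
        simp only [Pi.sub_apply, Pi.zero_apply]
        rw [VCAux.mulVec_single', VCAux.mulVec_single']
        have e1 : K zz (j, k) = q₀ zz.1 ⬝ᵥ q₀ j := by rw [hKgram]; rfl
        have e2 : K zz (j, k') = q₀ zz.1 ⬝ᵥ q₀ j := by rw [hKgram]; rfl
        rw [e1, e2, sub_self]
      have h0 := congrFun (hkerW v hKv) xx
      rw [hv, Matrix.mulVec_sub] at h0
      simp only [Pi.sub_apply, Pi.zero_apply] at h0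
      rw [VCAux.mulVec_single', VCAux.mulVec_single'] at h0
      linarith
    set M : Matrix α α ℝ := Matrix.of fun i j => gramMat pW (i, l₀) (j, l₀) with hM
    have hWM : ∀ (i : α) (l : β) (j : α) (k : β), gramMat pW (i, l) (j, k) = M i j := by
      intro i l j k
      calc gramMat pW (i, l) (j, k) = gramMat pW (i, l) (j, l₀) := hconst _ j k l₀
        _ = gramMat pW (j, l₀) (i, l) := VCAux.gram_symm pW _ _
        _ = gramMat pW (j, l₀) (i, l₀) := hconst _ i l l₀
        _ = gramMat pW (i, l₀) (j, l₀) := VCAux.gram_symm pW _ _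
        _ = M i j := rfl
    refine ⟨M, ⟨dW, fun i => pW (i, l₀), ⟨fun i => ?_, fun i j hij => ?_⟩, ?_⟩, ?_⟩
    · have h1 := hpW.1 (i, l₀)
      rw [hs] at h1
      exact h1
    · have h1 : pW (i, l₀) ⬝ᵥ pW (j, l₀) = M i j := hWM i l₀ j l₀
      have h2 : M i j = gramMat pW (i, l₀) (j, k₀) := (hWM i l₀ j k₀).symm
      have h3 := hpW.2 (i, l₀) (j, k₀) ⟨hij, hlk⟩
      rw [h1, h2]
      exact h3
    · ext i j
      rfl
    · ext x y
      obtain ⟨i, l⟩ := x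
      obtain ⟨j, k⟩ := y
      rw [Matrix.kroneckerMap_apply]
      show gramMat pW (i, l) (j, k) = M i j * allOnes β l k
      rw [hWM i l j k]
      show M i j = M i j * 1
      rw [mul_one]
  · -- all induced → equality
    intro hind2
    refine le_antisymm ?_ part1
    rw [hgrkG, hgrkP]
    refine csSup_le hSPne fun r hr => ?_
    obtain ⟨W, hWopt, hWr⟩ := hr
    obtain ⟨M, hMopt, hWeq⟩ := hind2 W hWopt
    obtain ⟨d, q, hq, hMq⟩ := hMopt
    have hrank : W.rank = (gramMat q).rank := by
      rw [hWeq, hMq]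
      exact (hinduced q hq).2
    refine le_csSup hSGbdd ⟨M, ⟨d, q, hq, hMq⟩, ?_⟩
    rw [← hWr, hrank, hMq]
end

section
/- Let G and H be finite simple graphs with χ_v(G) = χ_v(H), let p and q be optimal vector colorings of G and H respectively, and let w be the optimal vector coloring of G × H given by w_{(i,ℓ)} = (1/√2)(p_i ⊕ q_ℓ) for i ∈ V(G), ℓ ∈ V(H), where ⊕ denotes the direct sum (concatenation) of vectors. If i →_p j and ℓ →_q k, then (i,ℓ) →_w (j,k). -/
open Matrix Kronecker

section ArrowAux

private lemma append_dot' {m n : ℕ} (u u' : Fin m → ℝ) (v v' : Fin n → ℝ) :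
    dotProduct (Fin.append u v) (Fin.append u' v') =
      dotProduct u u' + dotProduct v v' := by
  simp [dotProduct, Fin.sum_univ_add, Fin.append_left, Fin.append_right]

private lemma dot_sum' {V : Type*} [Fintype V] {d : ℕ} (v : Fin d → ℝ) (f : V → Fin d → ℝ) :
    dotProduct v (∑ m, f m) = ∑ m, dotProduct v (f m) := by
  simp [dotProduct, Finset.mul_sum, Finset.sum_apply]
  rw [Finset.sum_comm]

private lemma sum_coef_eq {V : Type*} [Fintype V] {d : ℕ} {t : ℝ} {p : V → Fin d → ℝ}
    (hp1 : ∀ i, dotProduct (p i) (p i) = t - 1) {i : V} {c : V → ℝ}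
    (hct : ∀ l, c l ≠ 0 → dotProduct (p i) (p l) = -1)
    (hcsum : -p i = ∑ m, c m • p m) :
    ∑ m, c m = t - 1 := by
  have h1 : dotProduct (p i) (-p i) = -(t - 1) := by
    rw [dotProduct_neg, hp1 i]
  rw [hcsum, dot_sum'] at h1
  have h2 : ∀ m ∈ Finset.univ, dotProduct (p i) (c m • p m) = -(c m) := by
    intro m _
    rw [dotProduct_smul, smul_eq_mul]
    by_cases hm : c m = 0
    · simp [hm]
    · rw [hct m hm]; ring
  have h3 : ∑ m, -(c m) = -(t - 1) := (Finset.sum_congr rfl h2).symm.trans h1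
  rw [Finset.sum_neg_distrib] at h3
  linarith

end ArrowAux

/-- If `p`, `q` are optimal vector colorings of `G`, `H` (with
`χ_v(G) = χ_v(H)`) and `w (i,ℓ) = (1/√2) (pᵢ ⊕ q_ℓ)` is the direct-sum optimal vector
coloring of `G × H`, then `i →_p j` and `ℓ →_q k` imply `(i,ℓ) →_w (j,k)`. -/
theorem arrowIn_catProd {α β : Type*} [Fintype α] [Fintype β]
    (G : SimpleGraph α) (H : SimpleGraph β) (h : vecChrom G = vecChrom H)
    {d1 d2 : ℕ} (p : α → Fin d1 → ℝ) (q : β → Fin d2 → ℝ)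
    (hp : IsVecColoring G (vecChrom G) p) (hq : IsVecColoring H (vecChrom H) q)
    (w : α × β → Fin (d1 + d2) → ℝ)
    (hw : ∀ x : α × β, w x = (Real.sqrt 2)⁻¹ • Fin.append (p x.1) (q x.2))
    (i j : α) (l k : β) (hij : ArrowIn G p i j) (hlk : ArrowIn H q l k) :
    ArrowIn (catProd G H) w (i, l) (j, k) := by
  obtain ⟨hp1, _⟩ := hp
  obtain ⟨hq1, _⟩ := hq
  obtain ⟨c, hc0, hct, hcj, hcsum⟩ := hij
  obtain ⟨c', hc'0, hc't, hc'k, hc'sum⟩ := hlk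
  have hS : ∑ m, c m = vecChrom G - 1 :=
    sum_coef_eq hp1 (fun l hl => (hct l hl).2) hcsum
  have hS' : ∑ n, c' n = vecChrom G - 1 := by
    rw [h]; exact sum_coef_eq hq1 (fun l hl => (hc't l hl).2) hc'sum
  have hSpos : 0 < vecChrom G - 1 := by
    rw [← hS]
    calc (0:ℝ) < c j := hcj
      _ ≤ ∑ m, c m := Finset.single_le_sum (fun m _ => hc0 m) (Finset.mem_univ j)
  have hsq : (Real.sqrt 2)⁻¹ * (Real.sqrt 2)⁻¹ = 2⁻¹ := by
    rw [← mul_inv, Real.mul_self_sqrt (by norm_num : (0:ℝ) ≤ 2)]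
  refine ⟨fun x => c x.1 * c' x.2 / (vecChrom G - 1), ?_, ?_, ?_, ?_⟩
  · exact fun x => div_nonneg (mul_nonneg (hc0 _) (hc'0 _)) hSpos.le
  · intro x hx
    have hne : c x.1 * c' x.2 ≠ 0 := fun h0 => hx (by simp [h0])
    obtain ⟨ha, hb⟩ := mul_ne_zero_iff.mp hne
    refine ⟨⟨(hct _ ha).1, (hc't _ hb).1⟩, ?_⟩
    rw [hw (i, l), hw x, smul_dotProduct, dotProduct_smul,
      append_dot', (hct _ ha).2, (hc't _ hb).2, smul_eq_mul, smul_eq_mul]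
    nlinarith [hsq]
  · exact div_pos (mul_pos hcj hc'k) hSpos
  · funext z
    have hwz : ∀ x : α × β, w x z = (Real.sqrt 2)⁻¹ * Fin.append (p x.1) (q x.2) z := by
      intro x; rw [hw x]; rfl
    have hL : (-w (i, l)) z = -((Real.sqrt 2)⁻¹ * Fin.append (p i) (q l) z) := by
      simp [hwz (i, l)]
    have hR : (∑ x : α × β, (fun x => c x.1 * c' x.2 / (vecChrom G - 1)) x • w x) z
        = ∑ x : α × β, c x.1 * c' x.2 / (vecChrom G - 1) * w x z := by
      simp [Finset.sum_apply]
    rw [hL, hR]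
    induction z using Fin.addCases with
    | left z0 =>
      have hap : ∀ m n, Fin.append (p m) (q n) (Fin.castAdd d2 z0) = p m z0 :=
        fun m n => Fin.append_left _ _ _
      have hpz : ∑ m, c m * p m z0 = -p i z0 := by
        have := congrFun hcsum z0
        simp only [Pi.neg_apply, Finset.sum_apply, Pi.smul_apply, smul_eq_mul] at this
        linarith [this]
      rw [show -((Real.sqrt 2)⁻¹ * Fin.append (p i) (q l) (Fin.castAdd d2 z0))
          = -((Real.sqrt 2)⁻¹ * p i z0) by rw [hap]]
      have hinner : ∀ m, ∑ n, c (m, n).1 * c' (m, n).2 / (vecChrom G - 1) * w (m, n) (Fin.castAdd d2 z0)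
          = ((Real.sqrt 2)⁻¹ / (vecChrom G - 1) * (c m * p m z0)) * ∑ n, c' n := by
        intro m
        rw [Finset.mul_sum]
        refine Finset.sum_congr rfl fun n _ => ?_
        rw [hwz (m, n)]
        simp only [hap]
        ring
      rw [Fintype.sum_prod_type, Finset.sum_congr rfl (fun m _ => hinner m),
        ← Finset.sum_mul, ← Finset.mul_sum, hS', hpz]
      field_simp
    | right z0 =>
      have hap : ∀ m n, Fin.append (p m) (q n) (Fin.natAdd d1 z0) = q n z0 :=
        fun m n => Fin.append_right _ _ _
      have hqz : ∑ n, c' n * q n z0 = -q l z0 := by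
        have := congrFun hc'sum z0
        simp only [Pi.neg_apply, Finset.sum_apply, Pi.smul_apply, smul_eq_mul] at this
        linarith [this]
      rw [show -((Real.sqrt 2)⁻¹ * Fin.append (p i) (q l) (Fin.natAdd d1 z0))
          = -((Real.sqrt 2)⁻¹ * q l z0) by rw [hap]]
      have hinner : ∀ m, ∑ n, c (m, n).1 * c' (m, n).2 / (vecChrom G - 1) * w (m, n) (Fin.natAdd d1 z0)
          = ((Real.sqrt 2)⁻¹ / (vecChrom G - 1) * c m) * ∑ n, c' n * q n z0 := by
        intro m
        rw [Finset.mul_sum]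
        refine Finset.sum_congr rfl fun n _ => ?_
        rw [hwz (m, n)]
        simp only [hap]
        ring
      rw [Fintype.sum_prod_type, Finset.sum_congr rfl (fun m _ => hinner m),
        ← Finset.sum_mul, ← Finset.mul_sum, hS, hqz]
      field_simp
end
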